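/- arXiv:1508.04093 — 6 statements merged into one kernel-verified Lean document; each statement's English description precedes it below -/
import Mathlib

section
/- Let f be a probability density function on ℝⁿ such that f ∈ L^α(ℝⁿ) for each α > 0, and define F(α) = log ∫_{ℝⁿ} f^α. For α > 0 let X_α be a random vector with density f_α = f^α / ∫ f^α. Then F is infinitely differentiable on (0, ∞), and for every α > 0 one has F''(α) = V(X_α)/α², where V(X_α) = Var(log f_α(X_α)) is the varentropy of X_α. -/
open MeasureTheory

open Real

section Aux

lemma abs_log_le' {t ε : ℝ} (ht : 0 < t) (hε : 0 < ε) :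
    |Real.log t| ≤ (t ^ ε + t ^ (-ε)) / ε := by
  rw [abs_le]
  have h1 : Real.log (t ^ (-ε)) ≤ t ^ (-ε) - 1 := Real.log_le_sub_one_of_pos (rpow_pos_of_pos ht _)
  have h2 : Real.log (t ^ ε) ≤ t ^ ε - 1 := Real.log_le_sub_one_of_pos (rpow_pos_of_pos ht _)
  rw [Real.log_rpow ht] at h1 h2
  have j1 := rpow_nonneg ht.le ε
  have j2 := rpow_nonneg ht.le (-ε)
  constructor
  · rw [neg_le, le_div_iff₀ hε]; nlinarith
  · rw [le_div_iff₀ hε]; nlinarith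

lemma pt_bound {t c δ : ℝ} (ht : 0 ≤ t) (hc : 0 < c) (hδ : 0 < δ) (k : ℕ) :
    t ^ c * |Real.log t| ^ k ≤ (2/δ) ^ k * (t ^ (c + k*δ) + t ^ (c - k*δ)) := by
  rcases ht.eq_or_lt with h | h
  · rw [← h, Real.zero_rpow hc.ne', zero_mul]
    positivity
  · have hlog : |Real.log t| ^ k ≤ ((t ^ δ + t ^ (-δ)) / δ) ^ k :=
      pow_le_pow_left₀ (abs_nonneg _) (abs_log_le' h hδ) k
    have hm : ∀ s : ℝ, (max (t ^ δ) (t ^ (-δ)))^k ≤ t ^ (k*δ) + t ^ (-(k*δ)) := by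
      intro _
      have e : ∀ e : ℝ, (t ^ e) ^ k = t ^ (k * e) := by
        intro e; rw [← Real.rpow_natCast (t ^ e) k, ← Real.rpow_mul ht, mul_comm]
      rcases max_cases (t ^ δ) (t ^ (-δ)) with ⟨he, _⟩ | ⟨he, _⟩ <;> rw [he, e] <;>
        [skip; rw [mul_neg]] <;>
        [exact le_add_of_nonneg_right (rpow_nonneg ht _);
         exact le_add_of_nonneg_left (rpow_nonneg ht _)]
    have hsum : ((t ^ δ + t ^ (-δ)) / δ) ^ k ≤ (2/δ)^k * (t ^ (k*δ) + t ^ (-(k*δ))) := by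
      have hmax : t ^ δ + t ^ (-δ) ≤ 2 * max (t ^ δ) (t ^ (-δ)) := by
        rcases le_total (t ^ δ) (t ^ (-δ)) with hh | hh
        · rw [max_eq_right hh]; linarith
        · rw [max_eq_left hh]; linarith
      calc ((t ^ δ + t ^ (-δ)) / δ) ^ k ≤ ((2 * max (t ^ δ) (t ^ (-δ)))/δ) ^ k := by
            gcongr
          _ = (2/δ)^k * (max (t ^ δ) (t ^ (-δ)))^k := by
            rw [mul_div_right_comm, mul_pow]
          _ ≤ (2/δ)^k * (t ^ (k*δ) + t ^ (-(k*δ))) := by gcongr; exact hm 0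
    calc t ^ c * |Real.log t| ^ k ≤ t ^ c * ((2/δ)^k * (t ^ (k*δ) + t ^ (-(k*δ)))) := by
          exact mul_le_mul_of_nonneg_left (hlog.trans hsum) (rpow_nonneg ht c)
      _ = (2/δ) ^ k * (t ^ (c + k*δ) + t ^ (c - k*δ)) := by
          rw [Real.rpow_add h, Real.rpow_sub h, Real.rpow_neg ht, div_eq_mul_inv (t^c)]; ring

variable {n : ℕ} {f : (Fin n → ℝ) → ℝ}

lemma key_int (hf_meas : Measurable f) (hf_nonneg : ∀ x, 0 ≤ f x)
    (hf_Lp : ∀ α : ℝ, 0 < α → Integrable (fun x => f x ^ α)) (k : ℕ) {c : ℝ} (hc : 0 < c) :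
    Integrable (fun x => f x ^ c * |Real.log (f x)| ^ k) := by
  set δ : ℝ := c / (2 * (k + 1)) with hδdef
  have hδ : 0 < δ := by positivity
  have hkδ : (k : ℝ) * δ < c := by
    rw [hδdef, mul_div_assoc', div_lt_iff₀ (by positivity)]
    nlinarith [Nat.cast_nonneg (α := ℝ) k]
  have hmeas : AEStronglyMeasurable (fun x => f x ^ c * |Real.log (f x)| ^ k)
      (volume : Measure (Fin n → ℝ)) := by
    apply Measurable.aestronglyMeasurable
    exact (((Real.continuous_rpow_const hc.le).measurable.comp hf_meas)).mul ((hf_meas.log.abs).pow_const k)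
  have hbd : Integrable (fun x => (2/δ)^k * (f x ^ (c + k*δ) + f x ^ (c - k*δ))) :=
    (((hf_Lp _ (by nlinarith [mul_nonneg (Nat.cast_nonneg (α := ℝ) k) hδ.le])).add (hf_Lp _ (by linarith [hkδ]))).const_mul _)
  refine hbd.mono' hmeas (Filter.Eventually.of_forall fun x => ?_)
  have := pt_bound (hf_nonneg x) hc hδ k
  rwa [Real.norm_eq_abs, abs_of_nonneg (mul_nonneg (Real.rpow_nonneg (hf_nonneg x) c) (pow_nonneg (abs_nonneg _) k))]

lemma int_k (hf_meas : Measurable f) (hf_nonneg : ∀ x, 0 ≤ f x)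
    (hf_Lp : ∀ α : ℝ, 0 < α → Integrable (fun x => f x ^ α)) (k : ℕ) {c : ℝ} (hc : 0 < c) :
    Integrable (fun x => f x ^ c * Real.log (f x) ^ k) := by
  refine (key_int hf_meas hf_nonneg hf_Lp k hc).mono'
    (Measurable.aestronglyMeasurable ?_) (Filter.Eventually.of_forall fun x => ?_)
  · exact (((Real.continuous_rpow_const hc.le).measurable.comp hf_meas)).mul
      ((hf_meas.log).pow_const k)
  · rw [Real.norm_eq_abs, abs_mul, abs_pow,
      abs_of_nonneg (Real.rpow_nonneg (hf_nonneg x) c)]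

lemma rpow_mem_le {t a b β : ℝ} (ht : 0 ≤ t) (ha : 0 < a) (hab : a ≤ β) (hbb : β ≤ b) :
    t ^ β ≤ t ^ a + t ^ b := by
  rcases ht.eq_or_lt with h | h
  · have hβ0 : (0:ℝ) < β := lt_of_lt_of_le ha hab
    have hb0 : (0:ℝ) < b := lt_of_lt_of_le hβ0 hbb
    rw [← h, Real.zero_rpow hβ0.ne', Real.zero_rpow ha.ne', Real.zero_rpow hb0.ne']
    norm_num
  · rcases le_total 1 t with h1 | h1
    · exact le_add_of_nonneg_of_le (Real.rpow_nonneg ht a)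
        (Real.rpow_le_rpow_of_exponent_le h1 hbb)
    · exact le_add_of_le_of_nonneg (Real.rpow_le_rpow_of_exponent_ge h h1 hab)
        (Real.rpow_nonneg ht b)

lemma hasDeriv_Gk (hf_meas : Measurable f) (hf_nonneg : ∀ x, 0 ≤ f x)
    (hf_Lp : ∀ α : ℝ, 0 < α → Integrable (fun x => f x ^ α)) (k : ℕ) {α : ℝ} (hα : 0 < α) :
    HasDerivAt (fun β => ∫ x, f x ^ β * Real.log (f x) ^ k)
      (∫ x, f x ^ α * Real.log (f x) ^ (k + 1)) α := by
  have hmeas : ∀ c : ℝ, 0 < c → ∀ m : ℕ, AEStronglyMeasurable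
      (fun x => f x ^ c * Real.log (f x) ^ m) (volume : Measure (Fin n → ℝ)) :=
    fun c hc m => (((Real.continuous_rpow_const hc.le).measurable.comp hf_meas).mul
      ((hf_meas.log).pow_const m)).aestronglyMeasurable
  have hball : ∀ β ∈ Metric.ball α (α/2), α/2 ≤ β ∧ β ≤ 3*α/2 ∧ 0 < β := by
    intro β hβ
    rw [Metric.mem_ball, Real.dist_eq, abs_lt] at hβ
    exact ⟨by linarith, by linarith, by linarith⟩
  have key := hasDerivAt_integral_of_dominated_loc_of_deriv_le (μ := volume)
    (F := fun β x => f x ^ β * Real.log (f x) ^ k)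
    (F' := fun β x => f x ^ β * Real.log (f x) ^ (k+1))
    (bound := fun x => f x ^ (α/2) * |Real.log (f x)| ^ (k+1)
      + f x ^ (3*α/2) * |Real.log (f x)| ^ (k+1))
    (Metric.ball_mem_nhds α (half_pos hα))
    ((eventually_gt_nhds hα).mono fun β hβ => hmeas β hβ k)
    (int_k hf_meas hf_nonneg hf_Lp k hα)
    (hmeas α hα (k+1))
    (Filter.Eventually.of_forall fun x => ?_)
    (((key_int hf_meas hf_nonneg hf_Lp (k+1) (half_pos hα)).add
      (key_int hf_meas hf_nonneg hf_Lp (k+1) (by linarith))))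
    (Filter.Eventually.of_forall fun x => ?_)
  · exact key.2
  · -- bound
    intro β hβ
    obtain ⟨h1, h2, h3⟩ := hball β hβ
    rw [Real.norm_eq_abs, abs_mul, abs_pow,
      abs_of_nonneg (Real.rpow_nonneg (hf_nonneg x) β)]
    calc f x ^ β * |Real.log (f x)| ^ (k+1)
        ≤ (f x ^ (α/2) + f x ^ (3*α/2)) * |Real.log (f x)| ^ (k+1) := by
          exact mul_le_mul_of_nonneg_right (rpow_mem_le (hf_nonneg x) (half_pos hα) h1 h2)
            (pow_nonneg (abs_nonneg _) _)
      _ = _ := by ring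
  · -- differentiability
    intro β hβ
    obtain ⟨h1, h2, h3⟩ := hball β hβ
    rcases (hf_nonneg x).eq_or_lt with h | h
    · have hev : (fun b => f x ^ b * Real.log (f x) ^ k) =ᶠ[nhds β] (fun _ => (0:ℝ)) := by
        filter_upwards [eventually_gt_nhds h3] with b hb
        rw [← h, Real.zero_rpow hb.ne', zero_mul]
      have : HasDerivAt (fun b => f x ^ b * Real.log (f x) ^ k) 0 β :=
        (hasDerivAt_const β (0:ℝ)).congr_of_eventuallyEq hev
      refine this.congr_deriv (Eq.symm ?_)
      show f x ^ β * Real.log (f x) ^ (k+1) = (0:ℝ)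
      rw [← h, Real.zero_rpow h3.ne', zero_mul]
    · have := ((Real.hasStrictDerivAt_const_rpow h β).hasDerivAt).mul_const
        (Real.log (f x) ^ k)
      refine this.congr_deriv (Eq.symm ?_)
      show f x ^ β * Real.log (f x) ^ (k+1) = f x ^ β * Real.log (f x) * Real.log (f x) ^ k
      rw [pow_succ]; ring

lemma Gpos (hf_meas : Measurable f) (hf_nonneg : ∀ x, 0 ≤ f x) (hf_prob : ∫ x, f x = 1)
    (hf_Lp : ∀ α : ℝ, 0 < α → Integrable (fun x => f x ^ α)) {α : ℝ} (hα : 0 < α) :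
    0 < ∫ x, f x ^ α := by
  have hint1 : Integrable f := by simpa [Real.rpow_one] using hf_Lp 1 one_pos
  have hsupp : 0 < volume (Function.support f) :=
    (integral_pos_iff_support_of_nonneg hf_nonneg hint1).mp (by rw [hf_prob]; norm_num)
  have hsupp_eq : Function.support (fun x => f x ^ α) = Function.support f := by
    ext x
    simp [Function.mem_support, Real.rpow_eq_zero_iff_of_nonneg (hf_nonneg x), hα.ne']
  refine (integral_pos_iff_support_of_nonneg
    (fun x => Real.rpow_nonneg (hf_nonneg x) α) (hf_Lp α hα)).mpr ?_
  rw [hsupp_eq]; exact hsupp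

lemma smooth_Gk (hf_meas : Measurable f) (hf_nonneg : ∀ x, 0 ≤ f x)
    (hf_Lp : ∀ α : ℝ, 0 < α → Integrable (fun x => f x ^ α)) (m : ℕ) :
    ∀ k : ℕ, ContDiffOn ℝ m (fun β : ℝ => ∫ x, f x ^ β * Real.log (f x) ^ k) (Set.Ioi 0) := by
  induction m with
  | zero =>
    intro k
    rw [Nat.cast_zero, contDiffOn_zero]
    exact fun β hβ =>
      (hasDeriv_Gk hf_meas hf_nonneg hf_Lp k hβ).continuousAt.continuousWithinAt
  | succ m ih =>
    intro k
    rw [Nat.cast_succ, contDiffOn_succ_iff_deriv_of_isOpen isOpen_Ioi]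
    refine ⟨fun β hβ =>
      ((hasDeriv_Gk hf_meas hf_nonneg hf_Lp k hβ).differentiableAt).differentiableWithinAt,
      by simp, ?_⟩
    exact (ih (k+1)).congr fun β hβ =>
      (hasDeriv_Gk hf_meas hf_nonneg hf_Lp k hβ).deriv

end Aux

/-- The varentropy `V(X) = Var(log g(X)) = ∫ g (log g)² - (∫ g log g)²` of a random
vector `X` on `ℝⁿ` with density `g`. -/
noncomputable def varentropy {n : ℕ} (g : (Fin n → ℝ) → ℝ) : ℝ :=
  (∫ x, g x * (Real.log (g x)) ^ 2) - (∫ x, g x * Real.log (g x)) ^ 2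

/-- The tilted density `f_α = f^α / ∫ f^α`. -/
noncomputable def tilt {n : ℕ} (f : (Fin n → ℝ) → ℝ) (α : ℝ) : (Fin n → ℝ) → ℝ :=
  fun x => f x ^ α / ∫ y, f y ^ α

/-- If `f` is a probability density on `ℝⁿ` with `f ∈ L^α(ℝⁿ)` for every `α > 0`, and
`F(α) = log ∫ f^α`, then `F` is infinitely differentiable on `(0, ∞)` and
`F''(α) = V(X_α)/α²`, where `X_α` has the tilted density `f_α = f^α / ∫ f^α`. -/
theorem contDiffOn_and_second_deriv_log_moment {n : ℕ} (f : (Fin n → ℝ) → ℝ)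
    (hf_meas : Measurable f) (hf_nonneg : ∀ x, 0 ≤ f x)
    (hf_prob : ∫ x, f x = 1)
    (hf_Lp : ∀ α : ℝ, 0 < α → Integrable (fun x => f x ^ α)) :
    ContDiffOn ℝ (⊤ : ℕ∞) (fun α : ℝ => Real.log (∫ x, f x ^ α)) (Set.Ioi 0) ∧
      ∀ α : ℝ, 0 < α →
        deriv (deriv (fun α : ℝ => Real.log (∫ x, f x ^ α))) α
          = varentropy (tilt f α) / α ^ 2 := by
  have hGk0 : (fun β : ℝ => ∫ x, f x ^ β * Real.log (f x) ^ 0)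
      = fun β : ℝ => ∫ x, f x ^ β := by
    funext β; simp
  have hpos : ∀ {β : ℝ}, 0 < β → 0 < ∫ x, f x ^ β :=
    fun hβ => Gpos hf_meas hf_nonneg hf_prob hf_Lp hβ
  -- derivative of G
  have hd0 : ∀ {β : ℝ}, 0 < β → HasDerivAt (fun b : ℝ => ∫ x, f x ^ b)
      (∫ x, f x ^ β * Real.log (f x)) β := by
    intro β hβ
    have h := hasDeriv_Gk hf_meas hf_nonneg hf_Lp 0 hβ
    rw [hGk0] at h
    simpa using h
  have hd1 : ∀ {β : ℝ}, 0 < β → HasDerivAt (fun b : ℝ => ∫ x, f x ^ b * Real.log (f x))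
      (∫ x, f x ^ β * Real.log (f x) ^ 2) β := by
    intro β hβ
    have h := hasDeriv_Gk hf_meas hf_nonneg hf_Lp 1 hβ
    simpa using h
  constructor
  · -- smoothness
    have hsm : ContDiffOn ℝ (⊤ : ℕ∞) (fun β : ℝ => ∫ x, f x ^ β) (Set.Ioi 0) := by
      have : ∀ m : ℕ, ContDiffOn ℝ m (fun β : ℝ => ∫ x, f x ^ β) (Set.Ioi 0) := by
        intro m
        have := smooth_Gk hf_meas hf_nonneg hf_Lp m 0
        rwa [hGk0] at this
      exact contDiffOn_infty.mpr this
    exact hsm.log fun β hβ => (hpos hβ).ne'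
  · -- second derivative
    intro α hα
    set G0 : ℝ := ∫ x, f x ^ α with hG0
    set G1 : ℝ := ∫ x, f x ^ α * Real.log (f x) with hG1
    set G2 : ℝ := ∫ x, f x ^ α * Real.log (f x) ^ 2 with hG2
    have hne : G0 ≠ 0 := (hpos hα).ne'
    set M : ℝ := Real.log G0 with hM
    -- first derivative as a function on Ioi 0
    have hEq : Set.EqOn (deriv (fun b : ℝ => Real.log (∫ x, f x ^ b)))
        (fun b : ℝ => (∫ x, f x ^ b * Real.log (f x)) / (∫ x, f x ^ b)) (Set.Ioi 0) := by
      intro β hβ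
      exact ((hd0 hβ).log (hpos hβ).ne').deriv
    have hev : deriv (fun b : ℝ => Real.log (∫ x, f x ^ b))
        =ᶠ[nhds α] fun b : ℝ => (∫ x, f x ^ b * Real.log (f x)) / (∫ x, f x ^ b) :=
      Filter.eventuallyEq_of_mem (isOpen_Ioi.mem_nhds hα) hEq
    have hq : HasDerivAt (fun b : ℝ => (∫ x, f x ^ b * Real.log (f x)) / (∫ x, f x ^ b))
        ((G2 * G0 - G1 * G1) / G0 ^ 2) α := (hd1 hα).div (hd0 hα) hne
    have hD2 : deriv (deriv (fun b : ℝ => Real.log (∫ x, f x ^ b))) α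
        = (G2 * G0 - G1 * G1) / G0 ^ 2 := by
      rw [hev.deriv_eq]; exact hq.deriv
    -- integrability
    have hI0 : Integrable (fun x => f x ^ α) := hf_Lp α hα
    have hI1 : Integrable (fun x => f x ^ α * Real.log (f x)) := by
      simpa using int_k hf_meas hf_nonneg hf_Lp 1 hα
    have hI2 : Integrable (fun x => f x ^ α * Real.log (f x) ^ 2) :=
      int_k hf_meas hf_nonneg hf_Lp 2 hα
    -- pointwise identities
    have hlogt : ∀ x, 0 < f x → Real.log (tilt f α x) = α * Real.log (f x) - M := by
      intro x hx
      rw [tilt, Real.log_div (Real.rpow_pos_of_pos hx α).ne' hne, Real.log_rpow hx, hM, hG0]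
    have e2 : (fun x => tilt f α x * Real.log (tilt f α x))
        = fun x => G0⁻¹ * (α * (f x ^ α * Real.log (f x))) - G0⁻¹ * (M * f x ^ α) := by
      funext x
      rcases (hf_nonneg x).eq_or_lt with h | h
      · rw [tilt, ← h, Real.zero_rpow hα.ne']; simp
      · rw [hlogt x h, tilt, ← hG0, div_eq_mul_inv]; ring
    have e3 : (fun x => tilt f α x * Real.log (tilt f α x) ^ 2)
        = fun x => G0⁻¹ * (α ^ 2 * (f x ^ α * Real.log (f x) ^ 2))
          - G0⁻¹ * (2 * α * M * (f x ^ α * Real.log (f x))) + G0⁻¹ * (M ^ 2 * f x ^ α) := by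
      funext x
      rcases (hf_nonneg x).eq_or_lt with h | h
      · rw [tilt, ← h, Real.zero_rpow hα.ne']; simp
      · rw [hlogt x h, tilt, ← hG0, div_eq_mul_inv]; ring
    -- integrals of tilt expressions
    have hV1 : ∫ x, tilt f α x * Real.log (tilt f α x)
        = G0⁻¹ * (α * G1) - G0⁻¹ * (M * G0) := by
      rw [e2, integral_sub ((hI1.const_mul α).const_mul G0⁻¹)
        ((hI0.const_mul M).const_mul G0⁻¹), integral_const_mul, integral_const_mul,
        integral_const_mul, integral_const_mul, hG1, hG0]
    have hV2 : ∫ x, tilt f α x * Real.log (tilt f α x) ^ 2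
        = G0⁻¹ * (α ^ 2 * G2) - G0⁻¹ * (2 * α * M * G1) + G0⁻¹ * (M ^ 2 * G0) := by
      have hsub : Integrable (fun x => G0⁻¹ * (α ^ 2 * (f x ^ α * Real.log (f x) ^ 2))
          - G0⁻¹ * (2 * α * M * (f x ^ α * Real.log (f x)))) :=
        ((hI2.const_mul _).const_mul G0⁻¹).sub ((hI1.const_mul _).const_mul G0⁻¹)
      rw [e3]
      rw [integral_add hsub ((hI0.const_mul _).const_mul G0⁻¹),
        integral_sub ((hI2.const_mul _).const_mul G0⁻¹) ((hI1.const_mul _).const_mul G0⁻¹),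
        integral_const_mul, integral_const_mul, integral_const_mul, integral_const_mul,
        integral_const_mul, integral_const_mul, hG2, hG1, hG0]
    have hvar : varentropy (tilt f α)
        = (G0⁻¹ * (α ^ 2 * G2) - G0⁻¹ * (2 * α * M * G1) + G0⁻¹ * (M ^ 2 * G0))
          - (G0⁻¹ * (α * G1) - G0⁻¹ * (M * G0)) ^ 2 := by
      rw [varentropy, hV1, hV2]
    rw [hD2, hvar]
    field_simp
    ring
end

section
/- Let f be a probability density function on ℝⁿ such that f ∈ L^α(ℝⁿ) for each α > 0, and define F(α) = log ∫_{ℝⁿ} f^α. Then for every α > 0, F'(α) = ∫_{ℝⁿ} f_α log f dx = (F(α) - h(X_α))/α, where f_α = f^α / ∫ f^α, X_α has density f_α, and h(X_α) = -∫ f_α log f_α is the entropy of X_α. In particular, F'(1) = -h(X) for X with density f. -/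
open MeasureTheory

/-- The entropy `h(Y) = -∫ g log g` of a random vector `Y` on `ℝⁿ` with density `g`. -/
noncomputable def entropy {n : ℕ} (g : (Fin n → ℝ) → ℝ) : ℝ :=
  -∫ x, g x * Real.log (g x)

/-- `log t ≤ t ^ c / c` for `t > 0`, `c > 0`. -/
lemma log_le_rpow_div {t c : ℝ} (ht : 0 < t) (hc : 0 < c) :
    Real.log t ≤ t ^ c / c := by
  have h1 : Real.log (t ^ c) = c * Real.log t := Real.log_rpow ht c
  have h2 : Real.log (t ^ c) ≤ t ^ c - 1 :=
    Real.log_le_sub_one_of_pos (Real.rpow_pos_of_pos ht c)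
  rw [le_div_iff₀ hc]
  nlinarith [Real.rpow_pos_of_pos ht c]

/-- Key domination bound: `|t^α log t| ≤ (α-a)⁻¹ t^a + (b-α)⁻¹ t^b`. -/
lemma abs_rpow_mul_log_le {t a b α : ℝ} (ht : 0 ≤ t) (ha : 0 < a)
    (h1 : a < α) (h2 : α < b) :
    |t ^ α * Real.log t| ≤ (α - a)⁻¹ * t ^ a + (b - α)⁻¹ * t ^ b := by
  rcases eq_or_lt_of_le ht with h0 | h0
  · have hα : (0:ℝ) < α := lt_trans ha h1
    rw [← h0, Real.zero_rpow (ne_of_gt hα), Real.zero_rpow (ne_of_gt ha),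
      Real.zero_rpow (ne_of_gt (lt_trans hα h2))]
    simp
  have htapos := Real.rpow_pos_of_pos h0 a
  have htbpos := Real.rpow_pos_of_pos h0 b
  have htαpos := Real.rpow_pos_of_pos h0 α
  rcases le_total t 1 with hle | hge
  · -- t ≤ 1 : |log t| = log t⁻¹ ≤ (t⁻¹)^(α-a)/(α-a)
    have hlt : Real.log t ≤ 0 := Real.log_nonpos (le_of_lt h0) hle
    have : |t ^ α * Real.log t| = t ^ α * (-Real.log t) := by
      rw [abs_mul, abs_of_pos htαpos, abs_of_nonpos hlt]
    rw [this]
    have hinv : -Real.log t = Real.log t⁻¹ := (Real.log_inv t).symm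
    have hb : Real.log t⁻¹ ≤ (t⁻¹) ^ (α - a) / (α - a) :=
      log_le_rpow_div (inv_pos.mpr h0) (by linarith)
    have hinvr : (t⁻¹) ^ (α - a) = t ^ (a - α) := by
      rw [Real.inv_rpow ht, ← Real.rpow_neg ht]; ring_nf
    have key : t ^ α * (-Real.log t) ≤ t ^ α * (t ^ (a - α) / (α - a)) := by
      apply mul_le_mul_of_nonneg_left _ (le_of_lt htαpos)
      rw [hinv, ← hinvr]; exact hb
    refine key.trans ?_
    have hadd : t ^ α * t ^ (a - α) = t ^ a := by rw [← Real.rpow_add h0]; ring_nf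
    have : t ^ α * (t ^ (a - α) / (α - a)) = (α - a)⁻¹ * t ^ a := by
      rw [div_eq_mul_inv, ← mul_assoc, hadd, mul_comm]
    rw [this]
    have hba : (0:ℝ) < b - α := by linarith
    have : 0 ≤ (b - α)⁻¹ * t ^ b := by positivity
    linarith
  · -- t ≥ 1
    have hlt : 0 ≤ Real.log t := Real.log_nonneg hge
    have : |t ^ α * Real.log t| = t ^ α * Real.log t := by
      rw [abs_mul, abs_of_pos htαpos, abs_of_nonneg hlt]
    rw [this]
    have hb : Real.log t ≤ t ^ (b - α) / (b - α) := log_le_rpow_div h0 (by linarith)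
    have key : t ^ α * Real.log t ≤ t ^ α * (t ^ (b - α) / (b - α)) :=
      mul_le_mul_of_nonneg_left hb (le_of_lt htαpos)
    refine key.trans ?_
    have hadd : t ^ α * t ^ (b - α) = t ^ b := by rw [← Real.rpow_add h0]; ring_nf
    have : t ^ α * (t ^ (b - α) / (b - α)) = (b - α)⁻¹ * t ^ b := by
      rw [div_eq_mul_inv, ← mul_assoc, hadd, mul_comm]
    rw [this]
    have haa : (0:ℝ) < α - a := by linarith
    have : 0 ≤ (α - a)⁻¹ * t ^ a := by positivity
    linarith

/-- If `f` is a probability density on `ℝⁿ` with `f ∈ L^α(ℝⁿ)` for every `α > 0`, and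
`F(α) = log ∫ f^α`, then for every `α > 0`,
`F'(α) = ∫ f_α log f = (F(α) - h(X_α))/α`, where `X_α` has density `f_α = f^α / ∫ f^α`
and `h(X_α) = -∫ f_α log f_α`.  In particular `F'(1) = -h(X)` for `X` with density `f`. -/
theorem deriv_log_moment {n : ℕ} (f : (Fin n → ℝ) → ℝ)
    (hf_meas : Measurable f) (hf_nonneg : ∀ x, 0 ≤ f x)
    (hf_prob : ∫ x, f x = 1)
    (hf_Lp : ∀ α : ℝ, 0 < α → Integrable (fun x => f x ^ α)) :
    (∀ α : ℝ, 0 < α →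
        deriv (fun α : ℝ => Real.log (∫ x, f x ^ α)) α
            = ∫ x, tilt f α x * Real.log (f x) ∧
          deriv (fun α : ℝ => Real.log (∫ x, f x ^ α)) α
            = (Real.log (∫ x, f x ^ α) - entropy (tilt f α)) / α) ∧
      deriv (fun α : ℝ => Real.log (∫ x, f x ^ α)) 1 = -entropy f := by
  -- positivity of G α = ∫ f^α
  have hGpos : ∀ α : ℝ, 0 < α → 0 < ∫ x, f x ^ α := by
    intro α hα
    rw [integral_pos_iff_support_of_nonneg
      (fun x => Real.rpow_nonneg (hf_nonneg x) α) (hf_Lp α hα)]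
    have hsupp : Function.support (fun x => f x ^ α) = Function.support f := by
      ext x
      simp only [Function.mem_support, ne_eq]
      constructor
      · intro h hf0
        exact h (by rw [hf0, Real.zero_rpow (ne_of_gt hα)])
      · intro h h0
        rcases lt_of_le_of_ne (hf_nonneg x) (Ne.symm h) with hfx
        exact (ne_of_gt (Real.rpow_pos_of_pos hfx α)) h0
    rw [hsupp]
    by_contra hμ
    push_neg at hμ
    have hμ0 : MeasureTheory.volume (Function.support f) = 0 := le_antisymm hμ zero_le
    have : ∫ x, f x = 0 := by
      apply integral_eq_zero_of_ae
      rw [Filter.EventuallyEq, ae_iff]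
      apply measure_mono_null _ hμ0
      intro x hx
      simp only [Set.mem_setOf_eq] at hx
      exact hx
    rw [hf_prob] at this; norm_num at this
  -- main derivative lemma
  have hG' : ∀ α : ℝ, 0 < α →
      Integrable (fun x => f x ^ α * Real.log (f x)) ∧
      HasDerivAt (fun β : ℝ => ∫ x, f x ^ β) (∫ x, f x ^ α * Real.log (f x)) α := by
    intro α hα
    have hε : (0:ℝ) < α/2 := by linarith
    refine hasDerivAt_integral_of_dominated_loc_of_deriv_le (Metric.ball_mem_nhds α hε)
      (F := fun β x => f x ^ β) (F' := fun β x => f x ^ β * Real.log (f x))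
      (bound := fun x => (α/4)⁻¹ * f x ^ (α/4) + (α/2)⁻¹ * f x ^ (2*α))
      ?_ ?_ ?_ ?_ ?_ ?_
    · filter_upwards [Ioi_mem_nhds hα] with β hβ
      exact ((Real.continuous_rpow_const (le_of_lt hβ)).measurable.comp
        hf_meas).aestronglyMeasurable
    · exact hf_Lp α hα
    · exact ((((Real.continuous_rpow_const hα.le).measurable.comp hf_meas)).mul
        hf_meas.log).aestronglyMeasurable
    · filter_upwards with x β hβ
      rw [Metric.mem_ball, Real.dist_eq, abs_lt] at hβ
      have h1 : α/4 < β := by linarith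
      have h2 : β < 2*α := by linarith
      have hb := abs_rpow_mul_log_le (hf_nonneg x) (by linarith : (0:ℝ) < α/4) h1 h2
      calc ‖f x ^ β * Real.log (f x)‖ = |f x ^ β * Real.log (f x)| := rfl
        _ ≤ (β - α/4)⁻¹ * f x ^ (α/4) + (2*α - β)⁻¹ * f x ^ (2*α) := hb
        _ ≤ (α/4)⁻¹ * f x ^ (α/4) + (α/2)⁻¹ * f x ^ (2*α) := by
            gcongr <;>
              first
                | linarith
                | exact Real.rpow_nonneg (hf_nonneg x) _
    · exact ((hf_Lp (α/4) (by linarith)).const_mul _).add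
        ((hf_Lp (2*α) (by linarith)).const_mul _)
    · filter_upwards with x β hβ
      rw [Metric.mem_ball, Real.dist_eq, abs_lt] at hβ
      rcases eq_or_lt_of_le (hf_nonneg x) with h0 | h0
      · -- f x = 0
        have : (fun β : ℝ => f x ^ β) =ᶠ[nhds β] fun _ => (0:ℝ) := by
          have : Set.Ioi (0:ℝ) ∈ nhds β := Ioi_mem_nhds (by linarith)
          filter_upwards [this] with γ hγ
          rw [← h0, Real.zero_rpow (ne_of_gt hγ)]
        have h₂ : f x ^ β * Real.log (f x) = 0 := by
          rw [← h0, Real.zero_rpow (by linarith : β ≠ 0)]; ring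
        rw [h₂]
        exact (hasDerivAt_const β (0:ℝ)).congr_of_eventuallyEq this
      · exact (Real.hasStrictDerivAt_const_rpow h0 β).hasDerivAt
  -- derivative of F = log ∘ G
  have hF' : ∀ α : ℝ, 0 < α →
      HasDerivAt (fun β : ℝ => Real.log (∫ x, f x ^ β))
        ((∫ x, f x ^ α * Real.log (f x)) / (∫ x, f x ^ α)) α := by
    intro α hα
    exact ((hG' α hα).2).log (ne_of_gt (hGpos α hα))
  -- first identity
  have hfirst : ∀ α : ℝ, 0 < α →
      deriv (fun β : ℝ => Real.log (∫ x, f x ^ β)) α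
        = ∫ x, tilt f α x * Real.log (f x) := by
    intro α hα
    rw [(hF' α hα).deriv]
    rw [eq_comm, ← integral_div]
    congr 1
    ext x
    simp only [tilt]
    ring
  have htilt_int : ∀ α : ℝ, 0 < α → Integrable (tilt f α) := by
    intro α hα
    unfold tilt
    simpa [tilt, div_eq_mul_inv] using (hf_Lp α hα).mul_const (∫ y, f y ^ α)⁻¹
  have htilt_one : ∀ α : ℝ, 0 < α → ∫ x, tilt f α x = 1 := by
    intro α hα
    simp only [tilt]
    rw [integral_div, div_self (ne_of_gt (hGpos α hα))]
  -- entropy identity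
  have hsecond : ∀ α : ℝ, 0 < α →
      entropy (tilt f α) = Real.log (∫ x, f x ^ α)
        - α * ∫ x, tilt f α x * Real.log (f x) := by
    intro α hα
    have hG := hGpos α hα
    have hkey : ∀ x, tilt f α x * Real.log (tilt f α x)
        = α * (tilt f α x * Real.log (f x)) - Real.log (∫ y, f y ^ α) * tilt f α x := by
      intro x
      rcases eq_or_lt_of_le (hf_nonneg x) with h0 | h0
      · have : tilt f α x = 0 := by
          simp [tilt, ← h0, Real.zero_rpow (ne_of_gt hα)]
        rw [this]; ring
      · have hfα : (0:ℝ) < f x ^ α := Real.rpow_pos_of_pos h0 α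
        have : Real.log (tilt f α x) = α * Real.log (f x) - Real.log (∫ y, f y ^ α) := by
          simp only [tilt]
          rw [Real.log_div (ne_of_gt hfα) (ne_of_gt hG), Real.log_rpow h0]
        rw [this]; ring
    have hint1 : Integrable (fun x => tilt f α x * Real.log (f x)) := by
      have := ((hG' α hα).1).mul_const (∫ y, f y ^ α)⁻¹
      apply this.congr
      filter_upwards with x
      simp only [tilt, div_eq_mul_inv]
      ring
    have : ∫ x, tilt f α x * Real.log (tilt f α x)
        = α * (∫ x, tilt f α x * Real.log (f x)) - Real.log (∫ y, f y ^ α) := by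
      calc ∫ x, tilt f α x * Real.log (tilt f α x)
          = ∫ x, (α * (tilt f α x * Real.log (f x))
              - Real.log (∫ y, f y ^ α) * tilt f α x) := by
            congr 1; ext x; exact hkey x
        _ = α * (∫ x, tilt f α x * Real.log (f x)) - Real.log (∫ y, f y ^ α) := by
            rw [integral_sub (hint1.const_mul α) ((htilt_int α hα).const_mul _),
              integral_const_mul, integral_const_mul, htilt_one α hα, mul_one]
    simp only [entropy, this]; ring
  constructor
  · intro α hα
    refine ⟨hfirst α hα, ?_⟩
    rw [hfirst α hα, hsecond α hα]
    field_simp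
    ring
  · have h1 := hfirst 1 one_pos
    rw [h1]
    have : ∀ x, tilt f 1 x = f x := by
      intro x
      simp only [tilt, Real.rpow_one]
      rw [hf_prob, div_one]
    simp only [entropy, this, neg_neg]
end

section
/- Let φ : ℝⁿ → [0, ∞] be positively homogeneous of degree 1 (i.e., φ(tx) = t φ(x) for all t > 0 and x ∈ ℝⁿ) and suppose f = e^{-φ} is a probability density function on ℝⁿ. If X has density f, then the random variable Y = φ(X) has the gamma distribution with shape parameter n and scale parameter 1, i.e., Y has density f_Y(t) = t^{n-1} e^{-t} / (n-1)! on (0, ∞). -/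
open MeasureTheory
open scoped ENNReal ProbabilityTheory

open Set Real Filter Topology
open scoped Pointwise

section AuxGamma

variable {n : ℕ}


lemma aux_ibp {n : ℕ} (hn : 0 < n) (t : ℝ) :
    ∫ s in (0:ℝ)..t, s ^ n * Real.exp (-s)
      = -(t ^ n * Real.exp (-t)) + n * ∫ s in (0:ℝ)..t, s ^ (n-1) * Real.exp (-s) := by
  have hv : ∀ s : ℝ, HasDerivAt (fun s => -Real.exp (-s)) (Real.exp (-s)) s := by
    intro s
    have := ((Real.hasDerivAt_exp (-s)).comp s (hasDerivAt_neg s)).neg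
    exact this.congr_deriv (by simp)
  have hu : ∀ s : ℝ, HasDerivAt (fun s : ℝ => s ^ n) (n * s ^ (n-1)) s := fun s =>
    hasDerivAt_pow n s
  have key := intervalIntegral.integral_mul_deriv_eq_deriv_mul
    (a := (0:ℝ)) (b := t) (u := fun s : ℝ => s ^ n) (u' := fun s => n * s ^ (n-1))
    (v := fun s => -Real.exp (-s)) (v' := fun s => Real.exp (-s))
    (fun x _ => hu x) (fun x _ => hv x)
    ((continuous_const.mul (continuous_pow _)).intervalIntegrable _ _)
    ((Real.continuous_exp.comp continuous_neg).intervalIntegrable _ _)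
  rw [key, zero_pow hn.ne']
  have h2 : ∫ s in (0:ℝ)..t, (n : ℝ) * s ^ (n-1) * -Real.exp (-s)
      = -((n:ℝ) * ∫ s in (0:ℝ)..t, s ^ (n-1) * Real.exp (-s)) := by
    rw [← intervalIntegral.integral_const_mul, ← intervalIntegral.integral_neg]
    congr 1; ext s; ring
  rw [h2]; ring

lemma aux_eqon {n : ℕ} (hn : 0 < n) :
    Set.EqOn (fun s : ℝ => Real.exp (-s) * s ^ ((n:ℝ) - 1)) (fun s : ℝ => s ^ (n-1) * Real.exp (-s))
      (Set.Ioi 0) := by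
  intro s hs
  have : ((n:ℝ) - 1) = ((n - 1 : ℕ) : ℝ) := by
    rw [Nat.cast_sub hn]; simp
  simp only [this, Real.rpow_natCast]
  ring

lemma aux_gamma_integrable {n : ℕ} (hn : 0 < n) :
    IntegrableOn (fun s : ℝ => s ^ (n-1) * Real.exp (-s)) (Set.Ioi 0) :=
  (Real.GammaIntegral_convergent (by exact_mod_cast hn : (0:ℝ) < n)).congr_fun (aux_eqon hn)
    measurableSet_Ioi

lemma aux_gamma_int {n : ℕ} (hn : 0 < n) :
    ∫ s in Set.Ioi (0:ℝ), s ^ (n-1) * Real.exp (-s) = (n-1).factorial := by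
  rw [← setIntegral_congr_fun measurableSet_Ioi (aux_eqon hn),
    ← Real.Gamma_eq_integral (by exact_mod_cast hn : (0:ℝ) < n)]
  have : (n : ℝ) = ((n - 1 : ℕ) : ℝ) + 1 := by rw [Nat.cast_sub hn]; simp
  rw [this, Real.Gamma_nat_eq_factorial]

lemma aux_scale (hn : 0 < n) (φ : (Fin n → ℝ) → ℝ≥0∞)
    (hφ_hom : ∀ t : ℝ, 0 < t → ∀ x : Fin n → ℝ, φ (t • x) = ENNReal.ofReal t * φ x)
    {t : ℝ} (ht : 0 < t) :
    volume {x : Fin n → ℝ | φ x ≤ ENNReal.ofReal t}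
      = ENNReal.ofReal (t ^ n) * volume {x : Fin n → ℝ | φ x ≤ ENNReal.ofReal 1} := by
  have hset : {x : Fin n → ℝ | φ x ≤ ENNReal.ofReal t}
      = t • {x : Fin n → ℝ | φ x ≤ ENNReal.ofReal 1} := by
    ext y
    rw [Set.mem_smul_set_iff_inv_smul_mem₀ ht.ne']
    simp only [Set.mem_setOf_eq, ENNReal.ofReal_one]
    have h1 : φ y = ENNReal.ofReal t * φ (t⁻¹ • y) := by
      rw [← hφ_hom t ht, smul_smul, mul_inv_cancel₀ ht.ne', one_smul]
    rw [h1]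
    nth_rewrite 2 [show ENNReal.ofReal t = ENNReal.ofReal t * 1 from (mul_one _).symm]
    exact ENNReal.mul_le_mul_iff_right (by simpa using ht) ENNReal.ofReal_ne_top
  rw [hset, Measure.addHaar_smul_of_nonneg volume ht.le]
  congr 2
  simp [Module.finrank_pi]

lemma aux_zero (hn : 0 < n) (φ : (Fin n → ℝ) → ℝ≥0∞) {c : ℝ≥0∞} (hc : c ≠ ∞)
    (hscale : ∀ t : ℝ, 0 < t →
      volume {x : Fin n → ℝ | φ x ≤ ENNReal.ofReal t} = ENNReal.ofReal (t ^ n) * c) :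
    volume {x : Fin n → ℝ | φ x ≤ ENNReal.ofReal 0} = 0 := by
  have hle : ∀ k : ℕ, volume {x : Fin n → ℝ | φ x ≤ ENNReal.ofReal 0}
      ≤ ENNReal.ofReal ((1 / (k+1) : ℝ) ^ n) * c := by
    intro k
    refine le_trans (measure_mono fun x hx => ?_) (le_of_eq (hscale _ (by positivity)))
    simp only [Set.mem_setOf_eq] at hx ⊢
    exact le_trans hx (by simp)
  have htend : Tendsto (fun k : ℕ => ENNReal.ofReal ((1 / (k+1) : ℝ) ^ n) * c) atTop (𝓝 0) := by
    have h1 : Tendsto (fun k : ℕ => ((1 / (k+1) : ℝ)) ^ n) atTop (𝓝 (0 ^ n)) :=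
      (tendsto_one_div_add_atTop_nhds_zero_nat).pow n
    rw [zero_pow hn.ne'] at h1
    have := ENNReal.Tendsto.mul_const (ENNReal.tendsto_ofReal h1) (b := c) (Or.inr hc)
    simpa using this
  simpa using ge_of_tendsto htend (Eventually.of_forall hle)

lemma aux_open (hn : 0 < n) (φ : (Fin n → ℝ) → ℝ≥0∞) {c : ℝ≥0∞} (hc : c ≠ ∞)
    (hscale : ∀ t : ℝ, 0 < t →
      volume {x : Fin n → ℝ | φ x ≤ ENNReal.ofReal t} = ENNReal.ofReal (t ^ n) * c)
    {s : ℝ} (hs : 0 < s) :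
    volume {x : Fin n → ℝ | φ x < ENNReal.ofReal s} = ENNReal.ofReal (s ^ n) * c := by
  refine le_antisymm (le_trans (measure_mono fun x hx => ?_) (le_of_eq (hscale s hs))) ?_
  · simp only [Set.mem_setOf_eq] at hx ⊢
    exact le_of_lt hx
  have hstep : ∀ k : ℕ, ENNReal.ofReal ((s - s / (k+2)) ^ n) * c
      ≤ volume {x : Fin n → ℝ | φ x < ENNReal.ofReal s} := by
    intro k
    have hpos : 0 < s - s / (k+2) := by
      have : s / (k+2) < s := by
        apply div_lt_self hs
        have : (0:ℝ) ≤ (k:ℝ) := Nat.cast_nonneg k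
        linarith
      linarith
    rw [← hscale _ hpos]
    refine measure_mono fun x hx => ?_
    simp only [Set.mem_setOf_eq] at hx ⊢
    refine lt_of_le_of_lt hx (ENNReal.ofReal_lt_ofReal_iff hs |>.2 ?_)
    have : 0 < s / (k+2) := by positivity
    linarith
  have htend : Tendsto (fun k : ℕ => ENNReal.ofReal ((s - s / (k+2)) ^ n) * c) atTop
      (𝓝 (ENNReal.ofReal (s ^ n) * c)) := by
    have h0 : Tendsto (fun k : ℕ => (s / (k+2) : ℝ)) atTop (𝓝 0) := by
      have h2 := (tendsto_const_div_atTop_nhds_zero_nat s).comp (tendsto_add_atTop_nat 2)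
      refine Filter.Tendsto.congr (fun k => ?_) h2
      simp only [Function.comp]
      norm_num
    have h1 : Tendsto (fun k : ℕ => (s - s / (k+2) : ℝ) ^ n) atTop (𝓝 (s ^ n)) := by
      have := (tendsto_const_nhds (x := s)).sub h0
      rw [sub_zero] at this
      exact this.pow n
    exact ENNReal.Tendsto.mul_const (ENNReal.tendsto_ofReal h1) (Or.inr hc)
  exact le_of_tendsto htend (Eventually.of_forall hstep)

lemma aux_lint_exp (u : ℝ) :
    ∫⁻ s in Set.Ioi u, ENNReal.ofReal (Real.exp (-s)) = ENNReal.ofReal (Real.exp (-u)) := by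
  have hint : IntegrableOn (fun s : ℝ => Real.exp (-s)) (Set.Ioi u) :=
    (exp_neg_integrableOn_Ioi u zero_lt_one).congr_fun (fun x _ => by simp) measurableSet_Ioi
  rw [← ofReal_integral_eq_lintegral_ofReal hint
      ((ae_restrict_iff' measurableSet_Ioi).2 (ae_of_all _ fun s _ => (Real.exp_pos _).le)),
    integral_exp_neg_Ioi]

lemma aux_lint_exp' (u : ℝ) :
    ∫⁻ s : ℝ, (if u < s then ENNReal.ofReal (Real.exp (-s)) else 0)
      = ENNReal.ofReal (Real.exp (-u)) := by
  rw [← aux_lint_exp u, ← lintegral_indicator measurableSet_Ioi]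
  refine lintegral_congr fun s => ?_
  simp [Set.indicator_apply, Set.mem_Ioi]


lemma aux_cdf (hn : 0 < n) (φ : (Fin n → ℝ) → ℝ≥0∞) (hφ_meas : Measurable φ)
    {c : ℝ≥0∞} (hc : c ≠ ∞)
    (hscale : ∀ t : ℝ, 0 < t →
      volume {x : Fin n → ℝ | φ x ≤ ENNReal.ofReal t} = ENNReal.ofReal (t ^ n) * c)
    (hzero : volume {x : Fin n → ℝ | φ x ≤ ENNReal.ofReal 0} = 0)
    (hopen : ∀ s : ℝ, 0 < s →
      volume {x : Fin n → ℝ | φ x < ENNReal.ofReal s} = ENNReal.ofReal (s ^ n) * c)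
    {t : ℝ} (ht : 0 ≤ t) :
    ∫⁻ x in {x : Fin n → ℝ | φ x ≤ ENNReal.ofReal t},
        ENNReal.ofReal (Real.exp (-(φ x).toReal))
      = ENNReal.ofReal ((∫ s in (0:ℝ)..t, s ^ n * Real.exp (-s)) + t ^ n * Real.exp (-t)) * c := by
  set S := {x : Fin n → ℝ | φ x ≤ ENNReal.ofReal t} with hSdef
  have hS : MeasurableSet S := hφ_meas measurableSet_Iic
  have hφ' : Measurable fun x : Fin n → ℝ => (φ x).toReal := hφ_meas.ennreal_toReal
  set F : (Fin n → ℝ) → ℝ → ℝ≥0∞ :=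
    fun x s => if (φ x).toReal < s then ENNReal.ofReal (Real.exp (-s)) else 0 with hFdef
  have h1 : ∫⁻ x in S, ENNReal.ofReal (Real.exp (-(φ x).toReal))
      = ∫⁻ x in S, ∫⁻ s : ℝ, F x s := by
    refine setLIntegral_congr_fun hS (fun x _ => ?_)
    rw [aux_lint_exp' ((φ x).toReal)]
  have hFmeas : Measurable (Function.uncurry F) := by
    refine Measurable.ite (measurableSet_lt (hφ'.comp measurable_fst) measurable_snd) ?_
      measurable_const
    exact (Real.measurable_exp.comp measurable_snd.neg).ennreal_ofReal
  have h2 : ∫⁻ x in S, ∫⁻ s : ℝ, F x s = ∫⁻ s : ℝ, ∫⁻ x in S, F x s :=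
    lintegral_lintegral_swap hFmeas.aemeasurable
  have h3 : ∀ s : ℝ, ∫⁻ x in S, F x s
      = ENNReal.ofReal (Real.exp (-s)) * volume ({x : Fin n → ℝ | (φ x).toReal < s} ∩ S) := by
    intro s
    have hptw : ∀ x, F x s = Set.indicator {x : Fin n → ℝ | (φ x).toReal < s}
        (fun _ => ENNReal.ofReal (Real.exp (-s))) x := fun x => by
      simp [hFdef, Set.indicator_apply]
    rw [setLIntegral_congr_fun hS (fun x _ => hptw x),
      lintegral_indicator (show MeasurableSet {x : Fin n → ℝ | (φ x).toReal < s} from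
        measurableSet_lt hφ' measurable_const),
      setLIntegral_const, Measure.restrict_apply (show MeasurableSet {x : Fin n → ℝ | (φ x).toReal < s} from
        measurableSet_lt hφ' measurable_const)]
  rw [h1, h2]
  simp only [h3]
  -- split the s-integral
  rw [← lintegral_add_compl
      (fun s => ENNReal.ofReal (Real.exp (-s)) * volume ({x : Fin n → ℝ | (φ x).toReal < s} ∩ S))
      (measurableSet_Iic (a := (0:ℝ))), compl_Iic,
    ← Ioc_union_Ioi_eq_Ioi ht,
    lintegral_union measurableSet_Ioi (Set.Ioc_disjoint_Ioi le_rfl)]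
  have hpart1 : ∫⁻ s in Iic (0:ℝ),
      ENNReal.ofReal (Real.exp (-s)) * volume ({x : Fin n → ℝ | (φ x).toReal < s} ∩ S) = 0 := by
    rw [setLIntegral_congr_fun measurableSet_Iic (fun s hs => ?_), lintegral_zero]
    have : {x : Fin n → ℝ | (φ x).toReal < s} = ∅ := by
      ext x; simp only [Set.mem_setOf_eq, Set.mem_empty_iff_false, iff_false, not_lt]
      exact le_trans hs ENNReal.toReal_nonneg
    rw [this, Set.empty_inter, measure_empty, mul_zero]
  have hvolS : volume S = ENNReal.ofReal (t ^ n) * c := by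
    rcases eq_or_lt_of_le ht with rfl | h
    · rw [hSdef, hzero, zero_pow hn.ne', ENNReal.ofReal_zero, zero_mul]
    · exact hscale t h
  have hpart3 : ∫⁻ s in Ioi t,
      ENNReal.ofReal (Real.exp (-s)) * volume ({x : Fin n → ℝ | (φ x).toReal < s} ∩ S)
      = ENNReal.ofReal (t ^ n * Real.exp (-t)) * c := by
    have hseteq : ∀ s ∈ Ioi t, {x : Fin n → ℝ | (φ x).toReal < s} ∩ S = S := by
      intro s hs
      refine Set.inter_eq_right.2 fun x hx => ?_
      simp only [Set.mem_setOf_eq]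
      exact lt_of_le_of_lt (ENNReal.toReal_le_of_le_ofReal ht hx) hs
    rw [setLIntegral_congr_fun measurableSet_Ioi (fun s hs => by
      rw [hseteq s hs, hvolS])]
    rw [lintegral_mul_const _ (show Measurable fun s : ℝ => ENNReal.ofReal (Real.exp (-s)) from
      (Real.measurable_exp.comp measurable_neg).ennreal_ofReal)]
    rw [aux_lint_exp t]
    rw [← mul_assoc, ← ENNReal.ofReal_mul (Real.exp_pos (-t)).le, mul_comm (Real.exp (-t)) (t ^ n)]
  have hpart2 : ∫⁻ s in Ioc 0 t,
      ENNReal.ofReal (Real.exp (-s)) * volume ({x : Fin n → ℝ | (φ x).toReal < s} ∩ S)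
      = ENNReal.ofReal (∫ s in (0:ℝ)..t, s ^ n * Real.exp (-s)) * c := by
    have hseteq : ∀ s ∈ Ioc (0:ℝ) t, {x : Fin n → ℝ | (φ x).toReal < s} ∩ S
        = {x : Fin n → ℝ | φ x < ENNReal.ofReal s} := by
      intro s hs
      ext x
      simp only [Set.mem_inter_iff, Set.mem_setOf_eq, hSdef]
      constructor
      · rintro ⟨h1', h2'⟩
        have hne : φ x ≠ ∞ := (lt_of_le_of_lt h2' ENNReal.ofReal_lt_top).ne
        exact (ENNReal.lt_ofReal_iff_toReal_lt hne).2 h1'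
      · intro h
        have hne : φ x ≠ ∞ := (h.trans_le le_top).ne
        exact ⟨(ENNReal.lt_ofReal_iff_toReal_lt hne).1 h,
          le_trans h.le (ENNReal.ofReal_le_ofReal hs.2)⟩
    rw [setLIntegral_congr_fun measurableSet_Ioc (fun s hs => by
      rw [hseteq s hs, hopen s hs.1, ← mul_assoc,
        ← ENNReal.ofReal_mul (Real.exp_pos _).le, mul_comm (Real.exp (-s)) (s ^ n)])]
    rw [lintegral_mul_const _ (show Measurable fun s : ℝ => ENNReal.ofReal (s ^ n * Real.exp (-s)) from
      ((measurable_id.pow_const n).mul (Real.measurable_exp.comp measurable_neg)).ennreal_ofReal)]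
    congr 1
    have hint : IntegrableOn (fun s : ℝ => s ^ n * Real.exp (-s)) (Ioc 0 t) :=
      Continuous.integrableOn_Ioc (by continuity)
    rw [← ofReal_integral_eq_lintegral_ofReal hint
      ((ae_restrict_iff' measurableSet_Ioc).2 (ae_of_all _ fun s hs =>
        mul_nonneg (pow_nonneg hs.1.le n) (Real.exp_pos _).le))]
    rw [intervalIntegral.integral_of_le ht]
  rw [hpart1, hpart2, hpart3, zero_add, ← add_mul, ← ENNReal.ofReal_add ?ha ?hb]
  case ha =>
    apply intervalIntegral.integral_nonneg ht
    intro s hs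
    exact mul_nonneg (pow_nonneg hs.1 n) (Real.exp_pos _).le
  case hb => positivity

end AuxGamma

/-- If `φ : ℝⁿ → [0, ∞]` is positively homogeneous of degree 1 and
`f = e^{-φ}` is a probability density on `ℝⁿ`, then for `X` with density `f`,
the random variable `Y = φ(X)` has the gamma distribution with shape `n` and
scale 1, i.e. `Y` has density `t^{n-1} e^{-t} / (n-1)!` on `(0, ∞)`. -/
theorem gamma_dist_of_homogeneous_potential {n : ℕ} (hn : 0 < n)
    (φ : (Fin n → ℝ) → ℝ≥0∞) (hφ_meas : Measurable φ)
    (hφ_hom : ∀ t : ℝ, 0 < t → ∀ x : Fin n → ℝ, φ (t • x) = ENNReal.ofReal t * φ x)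
    (f : (Fin n → ℝ) → ℝ)
    (hf : ∀ x, f x = if φ x = ∞ then 0 else Real.exp (-(φ x).toReal))
    (hf_prob : ∫ x, f x = 1)
    {Ω : Type*} [MeasureSpace Ω] [IsProbabilityMeasure (ℙ : Measure Ω)]
    (X : Ω → (Fin n → ℝ)) (hX_meas : Measurable X)
    (hX_density : Measure.map X ℙ
      = volume.withDensity (fun x => ENNReal.ofReal (f x))) :
    Measure.map (fun ω => (φ (X ω)).toReal) ℙ
      = volume.withDensity (fun t : ℝ =>
          ENNReal.ofReal
            (if 0 < t then t ^ (n - 1) * Real.exp (-t) / (n - 1).factorial else 0)) := by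
  have hφ' : Measurable fun x : Fin n → ℝ => (φ x).toReal := hφ_meas.ennreal_toReal
  -- basic facts about f
  have hf0 : ∀ x, 0 ≤ f x := by
    intro x; rw [hf x]; split
    · exact le_rfl
    · exact (Real.exp_pos _).le
  have hf_meas : Measurable f := by
    have : f = fun x => if φ x = ∞ then 0 else Real.exp (-(φ x).toReal) := funext hf
    rw [this]
    exact Measurable.ite (hφ_meas (measurableSet_singleton ∞)) measurable_const
      (Real.measurable_exp.comp hφ'.neg)
  have hf_int : Integrable f := by
    by_contra h
    rw [integral_undef h] at hf_prob
    exact one_ne_zero hf_prob.symm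
  have hlint : ∫⁻ x, ENNReal.ofReal (f x) = 1 := by
    rw [← ofReal_integral_eq_lintegral_ofReal hf_int (ae_of_all _ hf0), hf_prob,
      ENNReal.ofReal_one]
  -- scaling of sublevel sets
  set c : ℝ≥0∞ := volume {x : Fin n → ℝ | φ x ≤ ENNReal.ofReal 1} with hcdef
  have hscale : ∀ t : ℝ, 0 < t →
      volume {x : Fin n → ℝ | φ x ≤ ENNReal.ofReal t} = ENNReal.ofReal (t ^ n) * c :=
    fun t ht => aux_scale hn φ hφ_hom ht
  have hc : c ≠ ∞ := by
    intro hctop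
    have hsub : ENNReal.ofReal (Real.exp (-1)) * c
        ≤ ∫⁻ x, ENNReal.ofReal (f x) := by
      rw [hcdef, ← setLIntegral_const]
      refine le_trans (setLIntegral_mono' (hφ_meas measurableSet_Iic) fun x hx => ?_)
        (setLIntegral_le_lintegral _ _)
      simp only [Set.mem_setOf_eq] at hx
      have hne : φ x ≠ ∞ := (lt_of_le_of_lt hx ENNReal.ofReal_lt_top).ne
      rw [hf x, if_neg hne]
      apply ENNReal.ofReal_le_ofReal
      apply Real.exp_le_exp.2
      simp only [neg_le_neg_iff]
      exact ENNReal.toReal_le_of_le_ofReal zero_le_one hx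
    rw [hlint, hctop, ENNReal.mul_top (by simp [Real.exp_pos])] at hsub
    exact (by simp : ¬ ((⊤:ℝ≥0∞) ≤ 1)) hsub
  have hzero := aux_zero hn φ hc hscale
  have hopen := fun (s : ℝ) (hs : 0 < s) => aux_open hn φ hc hscale hs
  -- the pushforward measure
  set ρ : Measure ℝ :=
    Measure.map (fun x : Fin n → ℝ => (φ x).toReal)
      (volume.withDensity fun x => ENNReal.ofReal (f x)) with hρdef
  have hmap : Measure.map (fun ω => (φ (X ω)).toReal) ℙ = ρ := by
    rw [hρdef, ← hX_density]
    exact (Measure.map_map hφ' hX_meas).symm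
  -- the indicator rewriting of the density
  have hA : MeasurableSet {x : Fin n → ℝ | φ x ≠ ∞} :=
    (hφ_meas (measurableSet_singleton ∞)).compl
  have hind : ∀ x, ENNReal.ofReal (f x)
      = Set.indicator {x : Fin n → ℝ | φ x ≠ ∞}
        (fun x => ENNReal.ofReal (Real.exp (-(φ x).toReal))) x := by
    intro x
    rw [hf x, Set.indicator_apply]
    by_cases h : φ x = ∞ <;> simp [h, Set.mem_setOf_eq]
  have hρIic : ∀ t : ℝ, ρ (Iic t)
      = ∫⁻ x in {x : Fin n → ℝ | (φ x).toReal ≤ t}, ENNReal.ofReal (f x) := by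
    intro t
    rw [hρdef, Measure.map_apply hφ' measurableSet_Iic,
      withDensity_apply _ (hφ' measurableSet_Iic)]
    rfl
  -- key CDF formula for t ≥ 0
  have hkey : ∀ t : ℝ, 0 ≤ t → ρ (Iic t)
      = ENNReal.ofReal ((n:ℝ) * ∫ s in (0:ℝ)..t, s ^ (n-1) * Real.exp (-s)) * c := by
    intro t ht
    have hTm : MeasurableSet {x : Fin n → ℝ | (φ x).toReal ≤ t} :=
      measurableSet_le hφ' measurable_const
    have hstepA : ∫⁻ x in {x : Fin n → ℝ | (φ x).toReal ≤ t}, ENNReal.ofReal (f x)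
        = ∫⁻ x in {x : Fin n → ℝ | φ x ≤ ENNReal.ofReal t},
            ENNReal.ofReal (Real.exp (-(φ x).toReal)) := by
      rw [setLIntegral_congr_fun hTm (fun x _ => hind x),
        lintegral_indicator hA, Measure.restrict_restrict hA]
      congr 2
      ext x
      simp only [Set.mem_inter_iff, Set.mem_setOf_eq]
      constructor
      · rintro ⟨h1, h2⟩
        exact (ENNReal.le_ofReal_iff_toReal_le h1 ht).2 h2
      · intro h
        have hne : φ x ≠ ∞ := (lt_of_le_of_lt h ENNReal.ofReal_lt_top).ne
        exact ⟨hne, ENNReal.toReal_le_of_le_ofReal ht h⟩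
    rw [hρIic t, hstepA, aux_cdf hn φ hφ_meas hc hscale hzero hopen ht]
    congr 2
    rw [aux_ibp hn t]
    ring
  -- total mass of ρ
  have hρuniv : ρ Set.univ = 1 := by
    rw [hρdef, Measure.map_apply hφ' MeasurableSet.univ, Set.preimage_univ,
      withDensity_apply _ MeasurableSet.univ, Measure.restrict_univ, hlint]
  -- normalization identity
  have hnorm : ENNReal.ofReal ((n:ℝ) * (n-1).factorial) * c = 1 := by
    have hT1 : Tendsto (fun k : ℕ => ρ (Iic (k:ℝ))) atTop (𝓝 (ρ Set.univ)) :=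
      (tendsto_measure_Iic_atTop ρ).comp tendsto_natCast_atTop_atTop
    have hreal : Tendsto (fun k : ℕ => ∫ s in (0:ℝ)..(k:ℝ), s ^ (n-1) * Real.exp (-s)) atTop
        (𝓝 ((n-1).factorial)) := by
      have := (intervalIntegral_tendsto_integral_Ioi 0 (aux_gamma_integrable hn)
        tendsto_id).comp tendsto_natCast_atTop_atTop
      rwa [aux_gamma_int hn] at this
    have hT2 : Tendsto (fun k : ℕ => ρ (Iic (k:ℝ))) atTop
        (𝓝 (ENNReal.ofReal ((n:ℝ) * (n-1).factorial) * c)) := by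
      have h2 : Tendsto (fun k : ℕ =>
          ENNReal.ofReal ((n:ℝ) * ∫ s in (0:ℝ)..(k:ℝ), s ^ (n-1) * Real.exp (-s)) * c) atTop
          (𝓝 (ENNReal.ofReal ((n:ℝ) * (n-1).factorial) * c)) :=
        ENNReal.Tendsto.mul_const (ENNReal.tendsto_ofReal (hreal.const_mul _)) (Or.inr hc)
      exact h2.congr fun k => (hkey (k:ℝ) (Nat.cast_nonneg k)).symm
    rw [← hρuniv]
    exact tendsto_nhds_unique hT2 hT1
  have hNpos : (0:ℝ) < (n:ℝ) * (n-1).factorial := by positivity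
  have hcval : c = (ENNReal.ofReal ((n:ℝ) * (n-1).factorial))⁻¹ := by
    have h0 : ENNReal.ofReal ((n:ℝ) * (n-1).factorial) ≠ 0 := by
      exact (ENNReal.ofReal_pos.2 hNpos).ne'
    calc c = ((ENNReal.ofReal ((n:ℝ) * (n-1).factorial))⁻¹
          * ENNReal.ofReal ((n:ℝ) * (n-1).factorial)) * c := by
          rw [ENNReal.inv_mul_cancel h0 ENNReal.ofReal_ne_top, one_mul]
      _ = (ENNReal.ofReal ((n:ℝ) * (n-1).factorial))⁻¹
          * (ENNReal.ofReal ((n:ℝ) * (n-1).factorial) * c) := by ring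
      _ = (ENNReal.ofReal ((n:ℝ) * (n-1).factorial))⁻¹ := by rw [hnorm, mul_one]
  -- finish by CDF comparison
  haveI : IsFiniteMeasure ρ := ⟨by rw [hρuniv]; exact ENNReal.one_lt_top⟩
  rw [hmap]
  refine Measure.ext_of_Iic ρ _ fun t => ?_
  rw [withDensity_apply _ measurableSet_Iic]
  rcases lt_or_ge t 0 with ht | ht
  · -- both sides are zero
    have hLHS : ρ (Iic t) = 0 := by
      rw [hρIic t]
      have : {x : Fin n → ℝ | (φ x).toReal ≤ t} = ∅ := by
        ext x
        simp only [Set.mem_setOf_eq, Set.mem_empty_iff_false, iff_false, not_le]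
        exact lt_of_lt_of_le ht ENNReal.toReal_nonneg
      rw [this, Measure.restrict_empty, lintegral_zero_measure]
    rw [hLHS, setLIntegral_congr_fun measurableSet_Iic (fun s hs => ?_),
      lintegral_zero]
    have hns : ¬ 0 < s := not_lt.2 (le_trans hs ht.le)
    rw [if_neg hns, ENNReal.ofReal_zero]
  · -- main case
    rw [hkey t ht, hcval]
    have hIic : Iic t = Iic 0 ∪ Ioc 0 t := (Iic_union_Ioc_eq_Iic ht).symm
    rw [hIic, lintegral_union measurableSet_Ioc (Iic_disjoint_Ioc le_rfl)]
    have hz : ∫⁻ s in Iic (0:ℝ), ENNReal.ofReal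
        (if 0 < s then s ^ (n - 1) * Real.exp (-s) / (n - 1).factorial else 0) = 0 := by
      rw [setLIntegral_congr_fun measurableSet_Iic (fun s hs => ?_), lintegral_zero]
      rw [if_neg (not_lt.2 hs), ENNReal.ofReal_zero]
    rw [hz, zero_add]
    have hpos : ∫⁻ s in Ioc (0:ℝ) t, ENNReal.ofReal
        (if 0 < s then s ^ (n - 1) * Real.exp (-s) / (n - 1).factorial else 0)
        = ENNReal.ofReal ((∫ s in (0:ℝ)..t, s ^ (n-1) * Real.exp (-s)) / (n-1).factorial) := by
      rw [setLIntegral_congr_fun measurableSet_Ioc (fun s hs => by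
        rw [if_pos hs.1])]
      have hint : IntegrableOn (fun s : ℝ => s ^ (n-1) * Real.exp (-s) / (n-1).factorial)
          (Ioc 0 t) := Continuous.integrableOn_Ioc
        (((continuous_pow (n-1)).mul (Real.continuous_exp.comp continuous_neg)).div_const _)
      rw [← ofReal_integral_eq_lintegral_ofReal hint
        ((ae_restrict_iff' measurableSet_Ioc).2 (ae_of_all _ fun s hs => by
          have := mul_nonneg (pow_nonneg hs.1.le (n-1)) (Real.exp_pos (-s)).le
          positivity))]
      rw [intervalIntegral.integral_of_le ht, ← integral_div]
    rw [hpos, ← div_eq_mul_inv, ← ENNReal.ofReal_div_of_pos hNpos]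
    congr 1
    exact mul_div_mul_left _ _ (show (n:ℝ) ≠ 0 from Nat.cast_ne_zero.2 hn.ne')
end

section
/- Let r : ℝ → (-∞, +∞] be defined by r(u) = u - log(1+u) for u > -1 and r(u) = +∞ for u ≤ -1. Then the Legendre transform r*(t) = sup_{u ∈ ℝ} (tu - r(u)) satisfies r*(t) = r(-t) for all t ∈ ℝ; i.e., r*(t) = -t - log(1-t) for t < 1 and r*(t) = +∞ for t ≥ 1. -/
/-- The rate function `r(u) = u - log(1+u)` for `u > -1`, and `r(u) = +∞` for `u ≤ -1`. -/
noncomputable def rate (u : ℝ) : EReal :=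
  if -1 < u then ((u - Real.log (1 + u) : ℝ) : EReal) else ⊤

/-- The Legendre transform of `r` satisfies `r*(t) = sup_u (tu - r(u)) = r(-t)` for all
`t ∈ ℝ`; i.e. `r*(t) = -t - log(1-t)` for `t < 1` and `r*(t) = +∞` for `t ≥ 1`. -/
theorem legendre_rate :
    ∀ t : ℝ,
      (⨆ u : ℝ, ((t * u : ℝ) : EReal) - rate u) = rate (-t) ∧
        rate (-t) = if t < 1 then ((-t - Real.log (1 - t) : ℝ) : EReal) else ⊤ := by
  intro t
  have hsnd : rate (-t) = if t < 1 then ((-t - Real.log (1 - t) : ℝ) : EReal) else ⊤ := by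
    by_cases ht : t < 1
    · rw [if_pos ht]
      simp only [rate, if_pos (by linarith : (-1:ℝ) < -t)]
      norm_num [show (1:ℝ) + -t = 1 - t from by ring]
    · rw [if_neg ht]
      simp only [rate, if_neg (by push_neg at ht ⊢; linarith : ¬ ((-1:ℝ) < -t))]
  refine ⟨?_, hsnd⟩
  by_cases ht : t < 1
  · have hs : 0 < 1 - t := by linarith
    rw [hsnd, if_pos ht]
    apply le_antisymm
    · apply iSup_le
      intro u
      by_cases hu : -1 < u
      · simp only [rate, if_pos hu, ← EReal.coe_sub, EReal.coe_le_coe_iff]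
        have ha : 0 < 1 + u := by linarith
        have h1 := Real.log_le_sub_one_of_pos (mul_pos ha hs)
        rw [Real.log_mul (ne_of_gt ha) (ne_of_gt hs)] at h1
        nlinarith
      · simp [rate, if_neg hu]
    · refine le_trans (le_of_eq ?_) (le_iSup _ (t / (1 - t)))
      have hu0 : -1 < t / (1 - t) := by
        rw [neg_lt, ← neg_div, div_lt_iff₀ hs]; nlinarith
      have h1u : 1 + t / (1 - t) = (1 - t)⁻¹ := by field_simp; ring
      simp only [rate, if_pos hu0, ← EReal.coe_sub, EReal.coe_eq_coe_iff, h1u,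
        Real.log_inv]
      field_simp
      ring
  · push_neg at ht
    rw [hsnd, if_neg (not_lt.mpr ht)]
    rw [iSup_eq_top]
    intro b hb
    obtain ⟨M, hbM, -⟩ := EReal.exists_between_coe_real hb
    refine ⟨Real.exp M, lt_of_lt_of_le hbM ?_⟩
    have he : (0:ℝ) < Real.exp M := Real.exp_pos M
    have hu : (-1:ℝ) < Real.exp M := by linarith
    simp only [rate, if_pos hu, ← EReal.coe_sub, EReal.coe_le_coe_iff]
    have hlog : M ≤ Real.log (1 + Real.exp M) := by
      calc M = Real.log (Real.exp M) := (Real.log_exp M).symm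
        _ ≤ Real.log (1 + Real.exp M) := Real.log_le_log he (by linarith)
    nlinarith
end

section
/- Let X be a random vector in ℝⁿ with a log-concave density f (and finite mean). Then ‖f‖_∞ ≤ e^n · f(E[X]), where ‖f‖_∞ is the essential supremum of f. -/
open MeasureTheory

/-- `f : ℝⁿ → [0,∞)` is log-concave, i.e. `f = e^{-U}` for some convex
`U : ℝⁿ → (-∞, +∞]`. -/
def LogConcave {n : ℕ} (f : (Fin n → ℝ) → ℝ) : Prop :=
  (∀ x, 0 ≤ f x) ∧
    ∀ x y : Fin n → ℝ, ∀ t : ℝ, 0 < t → t < 1 →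
      f x ^ t * f y ^ (1 - t) ≤ f (t • x + (1 - t) • y)

section FradeliziAux

open Filter Set

variable {n : ℕ}

private lemma logconcave_support_convex {f : (Fin n → ℝ) → ℝ} (hf : LogConcave f) :
    Convex ℝ {x | 0 < f x} := by
  intro x hx y hy a b ha hb hab
  rcases eq_or_lt_of_le ha with rfl | ha'
  · have hb1 : b = 1 := by linarith
    simpa [hb1] using hy
  rcases eq_or_lt_of_le hb with rfl | hb'
  · have ha1 : a = 1 := by linarith
    simpa [ha1] using hx
  have hb1 : b = 1 - a := by linarith
  have h := hf.2 x y a ha' (by linarith)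
  have hpos : 0 < f x ^ a * f y ^ (1 - a) :=
    mul_pos (Real.rpow_pos_of_pos hx _) (Real.rpow_pos_of_pos hy _)
  have : 0 < f (a • x + (1 - a) • y) := lt_of_lt_of_le hpos h
  rw [hb1]
  exact this

private lemma logconcave_negLog_convexOn {f : (Fin n → ℝ) → ℝ} (hf : LogConcave f) :
    ConvexOn ℝ {x | 0 < f x} (fun x => -Real.log (f x)) := by
  refine ⟨logconcave_support_convex hf, ?_⟩
  intro x hx y hy a b ha hb hab
  rcases eq_or_lt_of_le ha with rfl | ha'
  · have hb1 : b = 1 := by linarith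
    simp [hb1]
  rcases eq_or_lt_of_le hb with rfl | hb'
  · have ha1 : a = 1 := by linarith
    simp [ha1]
  have hb1 : b = 1 - a := by linarith
  have hcc := hf.2 x y a ha' (by linarith)
  have hx' : 0 < f x := hx
  have hy' : 0 < f y := hy
  have hpos : 0 < f x ^ a * f y ^ (1 - a) :=
    mul_pos (Real.rpow_pos_of_pos hx' _) (Real.rpow_pos_of_pos hy' _)
  have hlog := Real.log_le_log hpos hcc
  rw [Real.log_mul (ne_of_gt (Real.rpow_pos_of_pos hx' _))
      (ne_of_gt (Real.rpow_pos_of_pos hy' _)), Real.log_rpow hx', Real.log_rpow hy'] at hlog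
  simp only [smul_eq_mul]
  rw [hb1]
  linarith

private lemma exists_subgradient {S : Set (Fin n → ℝ)} {U : (Fin n → ℝ) → ℝ} {m : Fin n → ℝ}
    (hS : Convex ℝ S) (hU : ConvexOn ℝ S U) (hm : m ∈ interior S) :
    ∃ G : (Fin n → ℝ) →L[ℝ] ℝ, ∀ x ∈ S, U m + G (x - m) ≤ U x := by
  classical
  set A : Set ((Fin n → ℝ) × ℝ) := {p | p.1 ∈ interior S ∧ U p.1 < p.2} with hA
  have hA_convex : Convex ℝ A := by
    intro p hp q hq a b ha hb hab
    have h1 : (a • p + b • q).1 = a • p.1 + b • q.1 := rfl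
    have h2 : (a • p + b • q).2 = a * p.2 + b * q.2 := rfl
    constructor
    · rw [h1]
      exact hS.interior hp.1 hq.1 ha hb hab
    · rw [h1, h2]
      have h3 : U (a • p.1 + b • q.1) ≤ a * U p.1 + b * U q.1 := by
        have := hU.2 (interior_subset hp.1) (interior_subset hq.1) ha hb hab
        simpa [smul_eq_mul] using this
      have h4 : a * U p.1 + b * U q.1 < a * p.2 + b * q.2 := by
        rcases eq_or_lt_of_le ha with rfl | ha'
        · have hb1 : b = 1 := by linarith
          subst hb1
          simpa using hq.2
        · have h5 := mul_lt_mul_of_pos_left hp.2 ha'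
          have h6 := mul_le_mul_of_nonneg_left hq.2.le hb
          linarith
      linarith
  have hU_cont : ContinuousOn U (interior S) := hU.continuousOn_interior
  have hA_open : IsOpen A := by
    have h1 : IsOpen ((interior S) ×ˢ (univ : Set ℝ)) := isOpen_interior.prod isOpen_univ
    have h2 : ContinuousOn (fun p : (Fin n → ℝ) × ℝ => p.2 - U p.1) ((interior S) ×ˢ univ) := by
      apply ContinuousOn.sub continuous_snd.continuousOn
      exact hU_cont.comp continuous_fst.continuousOn (fun p hp => hp.1)
    have h3 : IsOpen ((interior S ×ˢ (univ : Set ℝ)) ∩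
        (fun p : (Fin n → ℝ) × ℝ => p.2 - U p.1) ⁻¹' (Ioi (0:ℝ))) :=
      h2.isOpen_inter_preimage h1 isOpen_Ioi
    convert h3 using 1
    ext p
    simp only [hA, mem_setOf_eq, mem_inter_iff, mem_prod, mem_univ, and_true, mem_preimage,
      mem_Ioi, sub_pos]
  have hmA : ((m, U m) : (Fin n → ℝ) × ℝ) ∉ A := fun h => lt_irrefl _ h.2
  obtain ⟨ψ, hψ⟩ := geometric_hahn_banach_open_point hA_convex hA_open hmA
  set c : ℝ := ψ (0, 1) with hc
  have hdecomp : ∀ (x : Fin n → ℝ) (t : ℝ), ψ (x, t) = ψ (x, 0) + t * c := by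
    intro x t
    have h : ((x, t) : (Fin n → ℝ) × ℝ) = (x, (0:ℝ)) + t • ((0 : Fin n → ℝ), (1:ℝ)) := by
      simp [Prod.ext_iff]
    rw [h, map_add, ψ.map_smul, smul_eq_mul]
  have hc_neg : c < 0 := by
    have h1 : ((m, U m + 1) : (Fin n → ℝ) × ℝ) ∈ A := ⟨hm, by simp⟩
    have h2 := hψ _ h1
    rw [hdecomp m (U m + 1), hdecomp m (U m)] at h2
    nlinarith
  have hc0 : c ≠ 0 := ne_of_lt hc_neg
  have hcpos : 0 < -c := by linarith
  have hgrad : ∀ x ∈ interior S, ψ (x, 0) + U x * c ≤ ψ (m, 0) + U m * c := by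
    intro x hx
    refine le_of_forall_pos_lt_add ?_
    intro ε hε
    have hδ : (0:ℝ) < ε / (-c) := div_pos hε hcpos
    have h1 : ((x, U x + ε / (-c)) : (Fin n → ℝ) × ℝ) ∈ A := ⟨hx, by linarith⟩
    have h2 := hψ _ h1
    rw [hdecomp x _, hdecomp m _] at h2
    have h3 : (U x + ε / (-c)) * c = U x * c - ε := by
      field_simp
      ring
    nlinarith
  set G : (Fin n → ℝ) →L[ℝ] ℝ :=
    (-c)⁻¹ • (ψ.comp (ContinuousLinearMap.inl ℝ (Fin n → ℝ) ℝ)) with hG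
  have hGx : ∀ x, G x = (-c)⁻¹ * ψ (x, 0) := by
    intro x
    simp [hG]
  have hsub_int : ∀ x ∈ interior S, U m + G (x - m) ≤ U x := by
    intro x hx
    have h := hgrad x hx
    have hGxm : G (x - m) = (-c)⁻¹ * (ψ (x, 0) - ψ (m, 0)) := by
      rw [map_sub, hGx, hGx]
      ring
    have key : ψ (x, 0) - ψ (m, 0) ≤ U m * c - U x * c := by linarith
    have h2 : (-c)⁻¹ * (ψ (x, 0) - ψ (m, 0)) ≤ (-c)⁻¹ * (U m * c - U x * c) :=
      mul_le_mul_of_nonneg_left key (le_of_lt (inv_pos.2 hcpos))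
    have h3 : (-c)⁻¹ * (U m * c - U x * c) = U x - U m := by
      field_simp
      ring
    rw [hGxm]
    rw [h3] at h2
    linarith
  refine ⟨G, fun x hx => ?_⟩
  have hz : ((1:ℝ)/2) • m + ((1:ℝ)/2) • x ∈ interior S :=
    hS.combo_interior_self_mem_interior hm hx (by norm_num) (by norm_num) (by norm_num)
  have h1 := hsub_int _ hz
  have h2 := hU.2 (interior_subset hm) hx (by norm_num : (0:ℝ) ≤ 1/2)
    (by norm_num : (0:ℝ) ≤ 1/2) (by norm_num)
  have h3 : ((1:ℝ)/2) • m + ((1:ℝ)/2) • x - m = ((1:ℝ)/2) • (x - m) := by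
    module
  rw [h3, G.map_smul, smul_eq_mul] at h1
  simp only [smul_eq_mul] at h1 h2
  linarith

private lemma mean_mem_interior {f : (Fin n → ℝ) → ℝ}
    (hf0 : ∀ x, 0 ≤ f x)
    (hS : Convex ℝ {x | 0 < f x})
    (hf_int : Integrable f) (hf_prob : ∫ x, f x = 1)
    (hf_mean : Integrable (fun x => f x • x)) :
    (∫ x, f x • x) ∈ interior {x | 0 < f x} := by
  classical
  set S := {x | 0 < f x} with hSdef
  set m := ∫ x, f x • x with hm
  have hvolS : volume S ≠ 0 := by
    intro h0
    have hae : f =ᵐ[volume] 0 := by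
      rw [Filter.EventuallyEq, ae_iff]
      have hsub : {x | ¬ f x = (0 : (Fin n → ℝ) → ℝ) x} ⊆ S := by
        intro x hx
        exact lt_of_le_of_ne (hf0 x) (Ne.symm hx)
      exact measure_mono_null hsub h0
    rw [integral_congr_ae hae] at hf_prob
    simp at hf_prob
  have hint_ne : (interior S).Nonempty := by
    rw [hS.interior_nonempty_iff_affineSpan_eq_top]
    by_contra h
    have h1 : volume ((affineSpan ℝ S : AffineSubspace ℝ (Fin n → ℝ)) : Set (Fin n → ℝ)) = 0 :=
      Measure.addHaar_affineSubspace _ _ h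
    exact hvolS (measure_mono_null (subset_affineSpan ℝ S) h1)
  have hfront : volume (frontier S) = 0 := hS.addHaar_frontier volume
  by_contra hmem
  obtain ⟨φ, hφ⟩ := geometric_hahn_banach_open_point hS.interior isOpen_interior hmem
  set g := fun x => f x * (φ m - φ x) with hg
  have hphi_int : Integrable (fun x => φ (f x • x)) := φ.integrable_comp hf_mean
  have hphi_int' : Integrable (fun x => f x * φ x) := by
    have : (fun x => φ (f x • x)) = fun x => f x * φ x := by
      funext x
      rw [φ.map_smul, smul_eq_mul]
    rwa [this] at hphi_int
  have hg_int : Integrable g := by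
    have h1 : Integrable (fun x => f x * φ m) := hf_int.mul_const _
    have : g = fun x => f x * φ m - f x * φ x := by
      funext x
      rw [hg]
      ring
    rw [this]
    exact h1.sub hphi_int'
  have hg_nonneg : 0 ≤ᵐ[volume] g := by
    have hfr : ∀ᵐ x, x ∉ frontier S := by
      rw [ae_iff]
      simpa using hfront
    filter_upwards [hfr] with x hx
    by_cases hxS : x ∈ interior S
    · have h1 := hφ x hxS
      exact mul_nonneg (hf0 x) (by linarith)
    · have hxnotS : x ∉ S := by
        intro hxS'
        exact hx ⟨subset_closure hxS', hxS⟩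
      have hfx : f x = 0 := le_antisymm (not_lt.1 hxnotS) (hf0 x)
      simp [hg, hfx]
  have hg_zero : ∫ x, g x = 0 := by
    have h2 : ∫ x, φ (f x • x) = φ m := by
      rw [φ.integral_comp_comm hf_mean]
    have expand : g = fun x => f x * φ m - φ (f x • x) := by
      funext x
      rw [hg, φ.map_smul, smul_eq_mul]
      ring
    rw [expand, integral_sub (hf_int.mul_const _) hphi_int, h2, integral_mul_const, hf_prob]
    ring
  have hgae : g =ᵐ[volume] 0 := (integral_eq_zero_iff_of_nonneg_ae hg_nonneg hg_int).1 hg_zero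
  have hposmeas : 0 < volume (interior S) :=
    isOpen_interior.measure_pos volume hint_ne
  have hsub2 : interior S ⊆ {x | ¬ g x = (0 : (Fin n → ℝ) → ℝ) x} := by
    intro x hx
    have h1 := hφ x hx
    have h2m : x ∈ S := interior_subset hx
    have h2 : (0:ℝ) < f x := h2m
    exact ne_of_gt (mul_pos h2 (sub_pos.2 h1))
  have hzero : volume (interior S) = 0 := by
    refine measure_mono_null hsub2 ?_
    rw [Filter.EventuallyEq, ae_iff] at hgae
    exact hgae
  exact absurd hzero (ne_of_gt hposmeas)

private lemma key_estimate {f : (Fin n → ℝ) → ℝ}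
    (hf_meas : Measurable f) (hf_lc : LogConcave f) (hf_int : Integrable f)
    (hf_prob : ∫ x, f x = 1) (hf_mean : Integrable (fun x => f x • x))
    {m : Fin n → ℝ} (hm : ∫ x, f x • x = m)
    {G : (Fin n → ℝ) →L[ℝ] ℝ} {a : ℝ} (ha : 0 < a)
    (hfa : ∀ x, f x ≤ a * Real.exp (G m - G x))
    {M ε θ : ℝ} (hM : 0 < M) (hε : 0 < ε) (hθ0 : 0 < θ) (hθ1 : θ < 1)
    {xe : Fin n → ℝ} (hxe : M * Real.exp (-ε) < f xe) :
    a ^ (-θ) ≤ (M * Real.exp (-ε)) ^ (-θ) * (((1 - θ) ^ n)⁻¹ : ℝ) := by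
  have hf0 := hf_lc.1
  set c₀ := M * Real.exp (-ε) with hc₀
  have hc₀pos : 0 < c₀ := mul_pos hM (Real.exp_pos _)
  have h1θ : (0:ℝ) < 1 - θ := by linarith
  -- pointwise lower bound
  have hpt1 : ∀ x, a ^ (-θ) * (f x + θ * (G (f x • x) - f x * G m)) ≤ f x ^ (1 - θ) := by
    intro x
    rcases eq_or_lt_of_le (hf0 x) with h0 | hfx
    · simp only [← h0, zero_smul, map_zero, zero_mul, sub_zero, mul_zero, add_zero]
      exact Real.rpow_nonneg le_rfl _
    · have hkey : Real.log (f x) ≤ Real.log a + (G m - G x) := by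
        have h1 := hfa x
        have h2 : Real.log (f x) ≤ Real.log (a * Real.exp (G m - G x)) :=
          Real.log_le_log hfx h1
        rwa [Real.log_mul (ne_of_gt ha) (ne_of_gt (Real.exp_pos _)), Real.log_exp] at h2
      have e1 : f x ^ (1 - θ) = f x * Real.exp ((-θ) * Real.log (f x)) := by
        rw [Real.rpow_def_of_pos hfx,
          show Real.log (f x) * (1 - θ) = Real.log (f x) + (-θ) * Real.log (f x) by ring,
          Real.exp_add, Real.exp_log hfx]
      rw [e1]
      have hGsm : G (f x • x) = f x * G x := by rw [G.map_smul, smul_eq_mul]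
      rw [hGsm,
        show a ^ (-θ) * (f x + θ * (f x * G x - f x * G m))
          = f x * (a ^ (-θ) * (1 + θ * (G x - G m))) by ring]
      apply mul_le_mul_of_nonneg_left _ (hf0 x)
      have h2 : 1 + θ * (G x - G m) ≤ Real.exp (θ * (G x - G m)) := by
        linarith [Real.add_one_le_exp (θ * (G x - G m))]
      have h3 : a ^ (-θ) = Real.exp ((-θ) * Real.log a) := by
        rw [Real.rpow_def_of_pos ha, mul_comm]
      calc a ^ (-θ) * (1 + θ * (G x - G m))
          ≤ a ^ (-θ) * Real.exp (θ * (G x - G m)) :=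
            mul_le_mul_of_nonneg_left h2 (Real.rpow_nonneg ha.le _)
        _ = Real.exp ((-θ) * Real.log a + θ * (G x - G m)) := by rw [h3, ← Real.exp_add]
        _ ≤ Real.exp ((-θ) * Real.log (f x)) := by
            apply Real.exp_le_exp.2
            nlinarith [mul_le_mul_of_nonneg_left hkey hθ0.le]
  -- pointwise upper bound
  have hpt2 : ∀ x, f x ^ (1 - θ) ≤ c₀ ^ (-θ) * f (θ • xe + (1 - θ) • x) := by
    intro x
    have hlc := hf_lc.2 xe x θ hθ0 hθ1
    have h4 : c₀ ^ θ ≤ f xe ^ θ := Real.rpow_le_rpow hc₀pos.le hxe.le hθ0.le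
    have h5 : c₀ ^ θ * f x ^ (1 - θ) ≤ f (θ • xe + (1 - θ) • x) :=
      le_trans (mul_le_mul_of_nonneg_right h4 (Real.rpow_nonneg (hf0 x) _)) hlc
    have h6 := mul_le_mul_of_nonneg_left h5 (Real.rpow_nonneg hc₀pos.le (-θ))
    rw [← mul_assoc, ← Real.rpow_add hc₀pos,
      show -θ + θ = (0:ℝ) by ring, Real.rpow_zero, one_mul] at h6
    exact h6
  -- integrability
  have hup_int : Integrable (fun x => c₀ ^ (-θ) * f (θ • xe + (1 - θ) • x)) := by
    have h7 : Integrable (fun y => f (θ • xe + y)) := hf_int.comp_add_left _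
    have h8 : Integrable (fun x => f (θ • xe + (1 - θ) • x)) :=
      h7.comp_smul (ne_of_gt h1θ)
    exact h8.const_mul _
  have hrpow_meas : Measurable (fun x => f x ^ (1 - θ)) :=
    (Real.continuous_rpow_const h1θ.le).measurable.comp hf_meas
  have hrpow_int : Integrable (fun x => f x ^ (1 - θ)) := by
    apply Integrable.mono' hup_int hrpow_meas.aestronglyMeasurable
    filter_upwards with x
    rw [Real.norm_eq_abs, abs_of_nonneg (Real.rpow_nonneg (hf0 x) _)]
    exact hpt2 x
  have h9 : Integrable (fun x => G (f x • x)) := G.integrable_comp hf_mean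
  have h10 : Integrable (fun x => f x * G m) := hf_int.mul_const _
  have hsub : Integrable (fun x => G (f x • x) - f x * G m) := h9.sub h10
  have hsub2 : Integrable (fun x => θ * (G (f x • x) - f x * G m)) := hsub.const_mul θ
  have hlo_int : Integrable (fun x => a ^ (-θ) * (f x + θ * (G (f x • x) - f x * G m))) :=
    ((hf_int.add hsub2).const_mul _)
  -- integral values
  have hlo_val : ∫ x, a ^ (-θ) * (f x + θ * (G (f x • x) - f x * G m)) = a ^ (-θ) := by
    rw [integral_const_mul, integral_add hf_int hsub2,
      integral_const_mul, integral_sub h9 h10, G.integral_comp_comm hf_mean, hm,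
      integral_mul_const, hf_prob]
    ring
  have hup_val : ∫ x, c₀ ^ (-θ) * f (θ • xe + (1 - θ) • x)
      = c₀ ^ (-θ) * (((1 - θ) ^ n)⁻¹ : ℝ) := by
    rw [integral_const_mul]
    congr 1
    have h11 := Measure.integral_comp_smul (volume : Measure (Fin n → ℝ))
      (fun y => f (θ • xe + y)) (1 - θ)
    rw [integral_add_left_eq_self, hf_prob] at h11
    rw [h11, Module.finrank_fin_fun, smul_eq_mul, mul_one,
      abs_of_nonneg (inv_nonneg.2 (pow_nonneg h1θ.le n))]
  calc a ^ (-θ) = ∫ x, a ^ (-θ) * (f x + θ * (G (f x • x) - f x * G m)) := hlo_val.symm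
    _ ≤ ∫ x, f x ^ (1 - θ) := integral_mono hlo_int hrpow_int hpt1
    _ ≤ ∫ x, c₀ ^ (-θ) * f (θ • xe + (1 - θ) • x) := integral_mono hrpow_int hup_int hpt2
    _ = c₀ ^ (-θ) * (((1 - θ) ^ n)⁻¹ : ℝ) := hup_val

-- limit: -log(1-θ)/θ → 1 as θ → 0⁺
private lemma neglog_slope_tendsto :
    Tendsto (fun θ : ℝ => -Real.log (1 - θ) / θ) (nhdsWithin 0 (Ioi 0)) (nhds 1) := by
  have hderiv : HasDerivAt (fun x : ℝ => -Real.log (1 - x)) 1 0 := by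
    have h1 : HasDerivAt (fun x : ℝ => 1 - x) (-1) 0 := (hasDerivAt_id 0).const_sub 1
    have h2 : HasDerivAt (fun x : ℝ => Real.log (1 - x)) ((1 - (0:ℝ))⁻¹ * (-1)) 0 :=
      (Real.hasDerivAt_log (by norm_num)).comp 0 h1
    have h3 : HasDerivAt (fun x : ℝ => -Real.log (1 - x)) (-((1 - (0:ℝ))⁻¹ * (-1))) 0 := h2.neg
    convert h3 using 1
    norm_num
  have h4 := hasDerivAt_iff_tendsto_slope.1 hderiv
  have h5 := h4.mono_left (nhdsWithin_mono (0:ℝ) (fun x hx => ne_of_gt hx))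
  apply h5.congr'
  filter_upwards [self_mem_nhdsWithin] with x hx
  rw [slope_def_field]
  norm_num

end FradeliziAux

open Filter Set in
/-- If `X` has a log-concave density `f` on `ℝⁿ` and a finite mean
`E[X] = ∫ x f(x) dx`, then `‖f‖_∞ ≤ eⁿ · f(E[X])`. -/
theorem sup_norm_le_exp_dim_mul_density_at_mean {n : ℕ} (f : (Fin n → ℝ) → ℝ)
    (hf_meas : Measurable f) (hf_lc : LogConcave f)
    (hf_prob : ∫ x, f x = 1)
    (hf_mean : Integrable (fun x => f x • x)) :
    essSup f volume ≤ Real.exp n * f (∫ x, f x • x) := by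
  classical
  have hf0 := hf_lc.1
  have hRHS : 0 ≤ Real.exp n * f (∫ x, f x • x) :=
    mul_nonneg (Real.exp_pos _).le (hf0 _)
  by_cases hbdd : ∃ b : ℝ, ∀ᵐ x, f x ≤ b
  swap
  · -- essentially unbounded : essSup is junk value 0
    have hT : {a : ℝ | volume {x | a < f x} = 0} = ∅ := by
      rw [eq_empty_iff_forall_notMem]
      intro b hb
      apply hbdd
      refine ⟨b, ?_⟩
      have hset : {x : Fin n → ℝ | ¬ f x ≤ b} = {x | b < f x} := by
        ext x
        simp [not_le]
      rw [ae_iff, hset]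
      exact hb
    have h0 : essSup f volume = 0 := by
      rw [essSup_eq_sInf, hT, Real.sInf_empty]
    rw [h0]
    exact hRHS
  obtain ⟨b, hb⟩ := hbdd
  have hbound : IsBoundedUnder (· ≤ ·) (ae volume) f := ⟨b, eventually_map.2 hb⟩
  set M := essSup f volume with hM
  have haeM : ∀ᵐ x, f x ≤ M := ae_le_essSup hbound
  have hf_int : Integrable f := by
    by_contra h
    rw [integral_undef h] at hf_prob
    norm_num at hf_prob
  have hMpos : 0 < M := by
    by_contra h
    push_neg at h
    have hz : f =ᵐ[volume] 0 := by
      filter_upwards [haeM] with x hx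
      exact le_antisymm (hx.trans h) (hf0 x)
    rw [integral_congr_ae hz] at hf_prob
    simp at hf_prob
  have hS : Convex ℝ {x | 0 < f x} := logconcave_support_convex hf_lc
  have hU := logconcave_negLog_convexOn hf_lc
  have hmem := mean_mem_interior hf0 hS hf_int hf_prob hf_mean
  set m := ∫ x, f x • x with hm
  have hfmS : m ∈ {x | 0 < f x} := interior_subset hmem
  have hfm : 0 < f m := hfmS
  obtain ⟨G, hG⟩ := exists_subgradient hS hU hmem
  have hfa : ∀ x, f x ≤ f m * Real.exp (G m - G x) := by
    intro x
    by_cases hx : 0 < f x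
    · have h1 := hG x hx
      rw [map_sub] at h1
      have h2 : Real.log (f x) ≤ Real.log (f m) + (G m - G x) := by linarith
      calc f x = Real.exp (Real.log (f x)) := (Real.exp_log hx).symm
        _ ≤ Real.exp (Real.log (f m) + (G m - G x)) := Real.exp_le_exp.2 h2
        _ = f m * Real.exp (G m - G x) := by rw [Real.exp_add, Real.exp_log hfm]
    · have hfx : f x = 0 := le_antisymm (not_lt.1 hx) (hf0 x)
      rw [hfx]
      positivity
  have hvol_ne : (volume : Measure (Fin n → ℝ)) Set.univ ≠ 0 :=
    (isOpen_univ.measure_pos volume ⟨0, trivial⟩).ne'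
  have hnear : ∀ ε : ℝ, 0 < ε → ∃ xe, M * Real.exp (-ε) < f xe := by
    intro ε hε
    by_contra h
    push_neg at h
    have hcT : M * Real.exp (-ε) ∈ {a : ℝ | volume {x | a < f x} = 0} := by
      have hemp : {x : Fin n → ℝ | M * Real.exp (-ε) < f x} = ∅ := by
        rw [eq_empty_iff_forall_notMem]
        intro x hx
        exact absurd (h x) (not_le.2 hx)
      rw [mem_setOf_eq, hemp]
      simp
    have hbddT : BddBelow {a : ℝ | volume {x | a < f x} = 0} := by
      refine ⟨0, fun a haT => ?_⟩
      by_contra hlt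
      push_neg at hlt
      have huniv : {x : Fin n → ℝ | a < f x} = Set.univ := by
        rw [eq_univ_iff_forall]
        intro x
        exact lt_of_lt_of_le hlt (hf0 x)
      rw [mem_setOf_eq, huniv] at haT
      exact hvol_ne haT
    have h1 : essSup f volume ≤ M * Real.exp (-ε) := by
      rw [essSup_eq_sInf]
      exact csInf_le hbddT hcT
    rw [← hM] at h1
    have h2 : M * Real.exp (-ε) < M * 1 :=
      mul_lt_mul_of_pos_left (Real.exp_lt_one_iff.2 (neg_lt_zero.2 hε)) hMpos
    rw [mul_one] at h2
    exact absurd h1 (not_le.2 h2)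
  have key : ∀ ε : ℝ, 0 < ε → ∀ θ : ℝ, 0 < θ → θ < 1 →
      Real.log M ≤ Real.log (f m) + ε + (n : ℝ) * (-Real.log (1 - θ) / θ) := by
    intro ε hε θ hθ0 hθ1
    obtain ⟨xe, hxe⟩ := hnear ε hε
    have hest := key_estimate hf_meas hf_lc hf_int hf_prob hf_mean hm.symm hfm hfa
      hMpos hε hθ0 hθ1 hxe
    have h1θ : (0:ℝ) < 1 - θ := by linarith
    have hc₀pos : (0:ℝ) < M * Real.exp (-ε) := mul_pos hMpos (Real.exp_pos _)
    have hpowpos : (0:ℝ) < ((1 - θ) ^ n)⁻¹ := by positivity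
    have hlog := Real.log_le_log (Real.rpow_pos_of_pos hfm _) hest
    rw [Real.log_mul (ne_of_gt (Real.rpow_pos_of_pos hc₀pos _)) (ne_of_gt hpowpos),
      Real.log_rpow hfm, Real.log_rpow hc₀pos, Real.log_inv, Real.log_pow,
      Real.log_mul (ne_of_gt hMpos) (Real.exp_ne_zero _), Real.log_exp] at hlog
    -- hlog : -θ * log (f m) ≤ -θ * (log M + -ε) + -(n * log (1-θ))
    rw [show Real.log (f m) + ε + (n : ℝ) * (-Real.log (1 - θ) / θ)
        = Real.log (f m) + ε + ((n : ℝ) * (-Real.log (1 - θ))) / θ by ring,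
      ← sub_le_iff_le_add', le_div_iff₀ hθ0]
    ring_nf at hlog ⊢
    linarith
  have hlim : ∀ ε : ℝ, 0 < ε → Real.log M ≤ Real.log (f m) + ε + n := by
    intro ε hε
    have htend : Tendsto
        (fun θ : ℝ => Real.log (f m) + ε + (n : ℝ) * (-Real.log (1 - θ) / θ))
        (nhdsWithin 0 (Ioi 0)) (nhds (Real.log (f m) + ε + (n : ℝ) * 1)) :=
      tendsto_const_nhds.add (neglog_slope_tendsto.const_mul _)
    have hev : ∀ᶠ θ : ℝ in nhdsWithin 0 (Ioi 0),
        Real.log M ≤ Real.log (f m) + ε + (n : ℝ) * (-Real.log (1 - θ) / θ) := by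
      filter_upwards [Ioo_mem_nhdsGT_of_mem (by norm_num : (0:ℝ) ∈ Ico 0 1)] with θ hθ
      exact key ε hε θ hθ.1 hθ.2
    have := ge_of_tendsto htend hev
    rwa [mul_one] at this
  have hfinal : Real.log M ≤ Real.log (f m) + n := by
    have h := le_of_forall_pos_le_add (a := Real.log M) (b := Real.log (f m) + n) ?_
    · exact h
    · intro ε hε
      have := hlim ε hε
      linarith
  calc M = Real.exp (Real.log M) := (Real.exp_log hMpos).symm
    _ ≤ Real.exp (Real.log (f m) + n) := Real.exp_le_exp.2 hfinal
    _ = Real.exp n * f m := by rw [Real.exp_add, Real.exp_log hfm, mul_comm]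
end

section
/- Let f be a log-concave probability density on ℝⁿ and let X have density f. Then for every 0 < c < 1/e, P{f(X) ≥ cⁿ ‖f‖_∞} ≥ 1 - (e · c · log(1/c))ⁿ, where ‖f‖_∞ is the essential supremum of f. -/
open MeasureTheory
open scoped ENNReal

open MeasureTheory Real Set Filter
open scoped ENNReal Topology

private lemma myIntOn {n : ℕ} {θ : ℝ} (hθ : 0 ≤ θ) :
    IntegrableOn (fun τ : ℝ => Real.exp (-τ) * τ ^ n) (Ioi θ) := by
  have h := Real.GammaIntegral_convergent (s := (n + 1 : ℝ)) (by positivity)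
  have h2 : IntegrableOn (fun τ : ℝ => Real.exp (-τ) * τ ^ n) (Ioi 0) := by
    refine h.congr_fun (fun x hx => ?_) measurableSet_Ioi
    simp only [add_sub_cancel_right, Real.rpow_natCast]
  exact h2.mono_set (Ioi_subset_Ioi hθ)

private lemma myGammaId (n : ℕ) {θ : ℝ} (hθ : 0 ≤ θ) :
    ∫ τ in Ioi θ, Real.exp (-τ) * τ ^ n
      = Real.exp (-θ) * ∑ k ∈ Finset.range (n + 1),
          ((n.factorial : ℝ) / k.factorial) * θ ^ k := by
  set p : ℝ → ℝ := fun τ => ∑ k ∈ Finset.range (n + 1),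
      ((n.factorial : ℝ) / k.factorial) * τ ^ k with hp
  set F : ℝ → ℝ := fun τ => -(Real.exp (-τ) * p τ) with hF
  have hderivsum : ∀ τ : ℝ, HasDerivAt p
      (∑ k ∈ Finset.range n, ((n.factorial : ℝ) / k.factorial) * τ ^ k) τ := by
    intro τ
    have h1 : HasDerivAt p
        (∑ k ∈ Finset.range (n + 1),
          ((n.factorial : ℝ) / k.factorial) * ((k : ℝ) * τ ^ (k - 1))) τ := by
      refine HasDerivAt.fun_sum (fun k _ => ?_)
      exact (hasDerivAt_pow k τ).const_mul _
    convert h1 using 1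
    rw [Finset.sum_range_succ' (fun k => ((n.factorial : ℝ) / k.factorial) * ((k : ℝ) * τ ^ (k - 1)))]
    simp only [Nat.cast_zero, zero_mul, mul_zero, add_zero, Nat.cast_ofNat]
    refine Finset.sum_congr rfl (fun k _ => ?_)
    have hfac : ((k + 1).factorial : ℝ) = (k + 1) * k.factorial := by
      push_cast [Nat.factorial_succ]; ring
    have hk : (k : ℝ) + 1 ≠ 0 := by positivity
    have hkf : (k.factorial : ℝ) ≠ 0 := by positivity
    push_cast
    rw [hfac]
    field_simp
  have hderivF : ∀ τ : ℝ, HasDerivAt F (Real.exp (-τ) * τ ^ n) τ := by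
    intro τ
    have hexp : HasDerivAt (fun τ : ℝ => Real.exp (-τ)) (-Real.exp (-τ)) τ := by
      simpa using (hasDerivAt_neg τ).exp
    have h := ((hexp.mul (hderivsum τ)).neg)
    refine h.congr_deriv ?_
    have hps : p τ = (∑ k ∈ Finset.range n, ((n.factorial : ℝ) / k.factorial) * τ ^ k) + τ ^ n := by
      show (∑ k ∈ Finset.range (n+1), ((n.factorial : ℝ) / k.factorial) * τ ^ k) = _
      rw [Finset.sum_range_succ]
      have : ((n.factorial : ℝ) / n.factorial) = 1 := by
        apply div_self; positivity
      rw [this, one_mul]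
    rw [hps]; ring
  have htend : Tendsto F atTop (nhds 0) := by
    have h1 : Tendsto (fun τ : ℝ => ∑ k ∈ Finset.range (n + 1),
        ((n.factorial : ℝ) / k.factorial) * (τ ^ k * Real.exp (-τ))) atTop
        (nhds (∑ k ∈ Finset.range (n + 1), ((n.factorial : ℝ) / k.factorial) * 0)) := by
      refine tendsto_finset_sum _ (fun k _ => ?_)
      exact (tendsto_pow_mul_exp_neg_atTop_nhds_zero k).const_mul _
    simp only [mul_zero, Finset.sum_const_zero] at h1
    have h2 : F = fun τ => -(∑ k ∈ Finset.range (n + 1),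
        ((n.factorial : ℝ) / k.factorial) * (τ ^ k * Real.exp (-τ))) := by
      funext τ
      show -(Real.exp (-τ) * ∑ k ∈ Finset.range (n + 1),
        ((n.factorial : ℝ) / k.factorial) * τ ^ k) = _
      rw [Finset.mul_sum]
      congr 1
      refine Finset.sum_congr rfl (fun k _ => ?_)
      ring
    rw [h2]
    simpa using h1.neg
  have := integral_Ioi_of_hasDerivAt_of_tendsto' (a := θ)
      (fun x _ => hderivF x) (myIntOn hθ) htend
  rw [this, hF]
  ring

private lemma myEssSupLe {n : ℕ} {f : (Fin n → ℝ) → ℝ} (hf0 : ∀ x, 0 ≤ f x) {b : ℝ}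
    (hb : volume {x | b < f x} = 0) : essSup f volume ≤ b := by
  rw [essSup_eq_sInf]
  refine csInf_le ⟨0, fun a ha => ?_⟩ hb
  by_contra hlt
  push_neg at hlt
  have huniv : {x : Fin n → ℝ | a < f x} = univ := by
    ext x; simp only [mem_setOf_eq, mem_univ, iff_true]
    exact lt_of_lt_of_le hlt (hf0 x)
  have hpos : 0 < (volume : Measure (Fin n → ℝ)) univ :=
    isOpen_univ.measure_pos volume univ_nonempty
  rw [mem_setOf_eq, huniv] at ha
  rw [ha] at hpos
  exact lt_irrefl 0 hpos

private lemma myScale {n : ℕ} {f : (Fin n → ℝ) → ℝ} (hf_lc : LogConcave f)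
    {x0 : Fin n → ℝ} {m : ℝ} (hm : 0 < m) (hx0 : m < f x0)
    {r a : ℝ} (hr : 0 < r) (ha0 : 0 < a) (ha1 : a < 1) :
    ENNReal.ofReal (a ^ n) * volume {x | m * r < f x}
      ≤ volume {x | m * r ^ a < f x} := by
  have himg : (AffineMap.homothety x0 a) '' {x | m * r < f x} ⊆ {x | m * r ^ a < f x} := by
    rintro _ ⟨x, hx, rfl⟩
    simp only [mem_setOf_eq] at hx ⊢
    have hcomb := hf_lc.2 x x0 a ha0 ha1
    have heq : a • x + (1 - a) • x0 = AffineMap.homothety x0 a x := by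
      simp only [AffineMap.homothety_apply, vsub_eq_sub, vadd_eq_add]
      module
    rw [heq] at hcomb
    refine lt_of_lt_of_le ?_ hcomb
    have hfx : 0 < f x := lt_trans (by positivity) hx
    have h1 : (m * r) ^ a < f x ^ a := Real.rpow_lt_rpow (by positivity) hx ha0
    have h2 : m ^ (1 - a) ≤ f x0 ^ (1 - a) :=
      Real.rpow_le_rpow hm.le hx0.le (by linarith)
    calc m * r ^ a = (m * r) ^ a * m ^ (1 - a) := by
          rw [Real.mul_rpow hm.le hr.le, mul_right_comm, ← Real.rpow_add hm]
          norm_num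
      _ < f x ^ a * m ^ (1 - a) :=
          mul_lt_mul_of_pos_right h1 (Real.rpow_pos_of_pos hm _)
      _ ≤ f x ^ a * f x0 ^ (1 - a) :=
          mul_le_mul_of_nonneg_left h2 (Real.rpow_pos_of_pos (by positivity) _).le
  calc ENNReal.ofReal (a ^ n) * volume {x | m * r < f x}
      = volume ((AffineMap.homothety x0 a) '' {x | m * r < f x}) := by
        rw [Measure.addHaar_image_homothety]
        congr 2
        rw [Module.finrank_fin_fun, abs_of_pos (by positivity)]
    _ ≤ volume {x | m * r ^ a < f x} := measure_mono himg

private lemma myMarkov {n : ℕ} {f : (Fin n → ℝ) → ℝ} (hf_meas : Measurable f)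
    (htot : ∫⁻ x, ENNReal.ofReal (f x) = 1) {t : ℝ} (ht : 0 < t) :
    volume {x | t < f x} ≠ ⊤ := by
  intro htop
  have h1 : volume {x : Fin n → ℝ | t < f x}
      ≤ volume {x : Fin n → ℝ | ENNReal.ofReal t ≤ ENNReal.ofReal (f x)} :=
    measure_mono (fun x hx => ENNReal.ofReal_le_ofReal (le_of_lt hx))
  have h2 := mul_meas_ge_le_lintegral₀
    (hf_meas.ennreal_ofReal.aemeasurable) (μ := volume) (ENNReal.ofReal t)
  rw [htot] at h2
  rw [htop] at h1
  rw [top_le_iff.1 h1] at h2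
  rw [ENNReal.mul_top (by simp [ht])] at h2
  exact (by simp at h2)

private lemma myMainEst {n : ℕ} {f : (Fin n → ℝ) → ℝ} (hf_meas : Measurable f)
    (hf_lc : LogConcave f) (htot : ∫⁻ x, ENNReal.ofReal (f x) = 1)
    {βM θ : ℝ} (hβM : 0 < βM) (hθ : 0 < θ)
    {x0 : Fin n → ℝ} (hx0 : βM * Real.exp θ < f x0)
    (hK : 0 < volume {x | βM < f x}) :
    ∫⁻ x in {x | f x < βM}, ENNReal.ofReal (f x)
      ≤ ENNReal.ofReal (Real.exp (-θ) * ∑ k ∈ Finset.range n, θ ^ k / k.factorial) := by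
  have hf0 := hf_lc.1
  set M' : ℝ := βM * Real.exp θ with hM'def
  have hM'pos : 0 < M' := by positivity
  set D : ℝ → ℝ≥0∞ := fun t => volume {x | t < f x} with hDdef
  set W : ℝ → ℝ≥0∞ := fun τ => D (M' * Real.exp (-τ)) with hWdef
  have hβMeq : M' * Real.exp (-θ) = βM := by
    rw [hM'def, mul_assoc, ← Real.exp_add]; simp
  have hDanti : Antitone D := fun t1 t2 h12 =>
    measure_mono (fun x hx => lt_of_le_of_lt h12 hx)
  have hDmeas : Measurable D := hDanti.measurable
  have hWmono : Monotone W := fun τ1 τ2 h12 =>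
    hDanti (mul_le_mul_of_nonneg_left (Real.exp_le_exp.2 (neg_le_neg h12)) hM'pos.le)
  have hWmeas : Measurable W :=
    hDmeas.comp (measurable_const.mul (Real.measurable_exp.comp measurable_neg))
  have hWtop : ∀ τ : ℝ, W τ ≠ ⊤ := fun τ => myMarkov hf_meas htot (by positivity)
  set K : ℝ≥0∞ := W θ with hKdef
  have hKeq : K = volume {x | βM < f x} := by
    show volume {x | M' * Real.exp (-θ) < f x} = _
    rw [hβMeq]
  have hK0 : 0 < K := by rw [hKeq]; exact hK
  have hKtop : K ≠ ⊤ := hWtop θ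
  -- scaling
  have hscale : ∀ σ τ : ℝ, 0 < σ → σ ≤ τ →
      ENNReal.ofReal ((σ / τ) ^ n) * W τ ≤ W σ := by
    intro σ τ hσ hστ
    rcases eq_or_lt_of_le hστ with rfl | hlt
    · simp [div_self (ne_of_gt hσ)]
    · have hτ : 0 < τ := lt_trans hσ hlt
      have ha0 : 0 < σ / τ := by positivity
      have ha1 : σ / τ < 1 := (div_lt_one hτ).2 hlt
      have h := myScale hf_lc hM'pos hx0 (r := Real.exp (-τ))
        (Real.exp_pos _) ha0 ha1
      have hrw : Real.exp (-τ) ^ (σ / τ : ℝ) = Real.exp (-σ) := by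
        rw [← Real.exp_mul]; congr 1; field_simp
      rw [hrw] at h
      exact h
  have hWub : ∀ τ : ℝ, θ ≤ τ → W τ ≤ ENNReal.ofReal ((τ / θ) ^ n) * K := by
    intro τ hτ
    have hτ0 : 0 < τ := lt_of_lt_of_le hθ hτ
    have h := hscale θ τ hθ hτ
    calc W τ = ENNReal.ofReal ((τ / θ) ^ n) * (ENNReal.ofReal ((θ / τ) ^ n) * W τ) := by
          rw [← mul_assoc, ← ENNReal.ofReal_mul (by positivity)]
          have h1 : (τ / θ) ^ n * (θ / τ) ^ n = 1 := by
            rw [← mul_pow, div_mul_div_comm, mul_comm]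
            rw [div_self (by positivity), one_pow]
          rw [h1, ENNReal.ofReal_one, one_mul]
      _ ≤ ENNReal.ofReal ((τ / θ) ^ n) * K := mul_le_mul_right h _
  -- layer cake
  have hA : MeasurableSet {x : Fin n → ℝ | f x < βM} :=
    measurableSet_lt hf_meas measurable_const
  have hDset : ∀ t : ℝ, MeasurableSet {x : Fin n → ℝ | t < f x} :=
    fun t => measurableSet_lt measurable_const hf_meas
  have layer : ∫⁻ x in {x | f x < βM}, ENNReal.ofReal (f x)
      = ∫⁻ t in Ioi (0:ℝ), volume ({x | t < f x} ∩ {x | f x < βM}) := by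
    rw [lintegral_eq_lintegral_meas_lt _ (ae_of_all _ hf0) hf_meas.aemeasurable]
    exact lintegral_congr fun t => Measure.restrict_apply (hDset t)
  have hfinle : volume {x : Fin n → ℝ | βM ≤ f x} ≠ ⊤ :=
    ne_top_of_le_ne_top (myMarkov hf_meas htot (show (0:ℝ) < βM/2 by positivity))
      (measure_mono (fun x hx => lt_of_lt_of_le (show βM/2 < βM by linarith) hx))
  have hstep1 : ∀ t ∈ Ioi (0:ℝ), volume ({x | t < f x} ∩ {x | f x < βM})
      ≤ (Ioo (0:ℝ) βM).indicator (fun t => D t - K) t := by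
    intro t ht
    by_cases htβ : t < βM
    · have htmem : t ∈ Ioo (0:ℝ) βM := ⟨ht, htβ⟩
      rw [indicator_of_mem htmem]
      have hsetEq : {x : Fin n → ℝ | t < f x} ∩ {x | f x < βM}
          = {x | t < f x} \ {x | βM ≤ f x} := by
        ext x
        simp only [mem_inter_iff, mem_setOf_eq, mem_diff, not_le]
      have hsub2 : {x : Fin n → ℝ | βM ≤ f x} ⊆ {x | t < f x} :=
        fun x hx => lt_of_lt_of_le htβ hx
      rw [hsetEq, measure_diff hsub2
        (measurableSet_le measurable_const hf_meas).nullMeasurableSet hfinle]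
      refine tsub_le_tsub_left ?_ _
      rw [hKeq]
      refine measure_mono fun x hx => ?_
      simp only [mem_setOf_eq] at hx ⊢
      exact le_of_lt hx
    · rw [indicator_of_notMem (fun hmem => htβ hmem.2)]
      have hempty : {x : Fin n → ℝ | t < f x} ∩ {x | f x < βM} = ∅ := by
        ext x
        simp only [mem_inter_iff, mem_setOf_eq, mem_empty_iff_false, iff_false, not_and, not_lt]
        intro hx
        exact le_trans (not_lt.1 htβ) hx.le
      simp [hempty]
  have hnum1 : ∫⁻ x in {x | f x < βM}, ENNReal.ofReal (f x)
      ≤ ∫⁻ t in Ioo (0:ℝ) βM, (D t - K) := by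
    rw [layer]
    calc ∫⁻ t in Ioi (0:ℝ), volume ({x | t < f x} ∩ {x | f x < βM})
        ≤ ∫⁻ t in Ioi (0:ℝ), (Ioo (0:ℝ) βM).indicator (fun t => D t - K) t :=
          setLIntegral_mono ((hDmeas.sub measurable_const).indicator measurableSet_Ioo) hstep1
      _ = ∫⁻ t in Ioo (0:ℝ) βM, (D t - K) := by
          rw [lintegral_indicator measurableSet_Ioo,
            Measure.restrict_restrict measurableSet_Ioo,
            inter_eq_left.2 (fun t ht => ht.1)]
  -- substitution t = M' * exp (-τ)
  have hsubst : ∀ (θ' : ℝ) (g : ℝ → ℝ≥0∞), ∫⁻ t in Ioo 0 (M' * Real.exp (-θ')), g t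
      = ∫⁻ τ in Ioi θ', ENNReal.ofReal (M' * Real.exp (-τ)) * g (M' * Real.exp (-τ)) := by
    intro θ' g
    have himg : (fun τ => M' * Real.exp (-τ)) '' Ioi θ' = Ioo 0 (M' * Real.exp (-θ')) := by
      ext y
      constructor
      · rintro ⟨τ, hτ, rfl⟩
        refine ⟨by positivity, ?_⟩
        have h1 : Real.exp (-τ) < Real.exp (-θ') :=
          Real.exp_lt_exp.2 (by simpa using (mem_Ioi.1 hτ))
        exact mul_lt_mul_of_pos_left h1 hM'pos
      · rintro ⟨hy0, hy1⟩
        refine ⟨Real.log (M' / y), ?_, ?_⟩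
        · rw [mem_Ioi, ← Real.log_exp θ']
          refine Real.log_lt_log (Real.exp_pos _) ?_
          rw [lt_div_iff₀ hy0]
          calc Real.exp θ' * y = y * Real.exp θ' := mul_comm _ _
            _ < (M' * Real.exp (-θ')) * Real.exp θ' :=
             mul_lt_mul_of_pos_right hy1 (Real.exp_pos _)
            _ = M' := by rw [mul_assoc, ← Real.exp_add]; simp
        · show M' * Real.exp (-Real.log (M' / y)) = y
          rw [Real.exp_neg, Real.exp_log (by positivity)]
          field_simp
    have hderiv : ∀ τ ∈ Ioi θ', HasFDerivWithinAt (fun τ => M' * Real.exp (-τ))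
        ((1 : ℝ →L[ℝ] ℝ).smulRight (-(M' * Real.exp (-τ)))) (Ioi θ') τ := by
      intro τ _
      have h : HasDerivAt (fun τ => M' * Real.exp (-τ)) (-(M' * Real.exp (-τ))) τ := by
        have := ((Real.hasDerivAt_exp (-τ)).comp τ ((hasDerivAt_id τ).neg)).const_mul M'
        simpa [mul_comm, mul_assoc] using this
      exact h.hasDerivWithinAt.hasFDerivWithinAt
    have hinj : InjOn (fun τ => M' * Real.exp (-τ)) (Ioi θ') := by
      intro a _ b _ hab
      simp only at hab
      have h1 := mul_left_cancel₀ (ne_of_gt hM'pos) hab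
      have h2 := Real.exp_injective h1
      linarith [neg_inj.1 h2]
    rw [← himg, lintegral_image_eq_lintegral_abs_det_fderiv_mul volume measurableSet_Ioi
      hderiv hinj g]
    refine lintegral_congr fun τ => ?_
    rw [show ∀ v : ℝ, ((1 : ℝ →L[ℝ] ℝ).smulRight v).det = v from fun v => ContinuousLinearMap.det_toSpanSingleton v, abs_neg, abs_of_pos (by positivity)]
  set C : ℝ≥0∞ := ∫⁻ τ in Ioi θ, ENNReal.ofReal (Real.exp (-τ)) * W τ with hCdef
  have hexpmeas : Measurable fun τ : ℝ => ENNReal.ofReal (Real.exp (-τ)) :=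
    (Real.measurable_exp.comp measurable_neg).ennreal_ofReal
  have hexpint : ∀ {θ' : ℝ}, 0 ≤ θ' → IntegrableOn (fun τ : ℝ => Real.exp (-τ)) (Ioi θ') := by
    intro θ' hθ'
    exact (myIntOn (n := 0) hθ').congr_fun (fun x _ => by simp) measurableSet_Ioi
  have hEK : ∫⁻ τ in Ioi θ, ENNReal.ofReal (Real.exp (-τ)) * K
      = K * ENNReal.ofReal (Real.exp (-θ)) := by
    rw [lintegral_mul_const _ hexpmeas,
      ← ofReal_integral_eq_lintegral_ofReal (hexpint hθ.le)
        (ae_of_all _ fun τ => (Real.exp_pos _).le),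
      integral_exp_neg_Ioi, mul_comm]
  have hinner : ∫⁻ τ in Ioi θ, ENNReal.ofReal (Real.exp (-τ)) * (W τ - K)
      = C - K * ENNReal.ofReal (Real.exp (-θ)) := by
    refine ENNReal.eq_sub_of_add_eq ?_ ?_
    · rw [← hEK]
      exact ne_of_lt (lt_of_le_of_lt (lintegral_mono fun τ => mul_le_mul_right
        (le_refl K) _) (by rw [hEK]; exact ENNReal.mul_lt_top hKtop.lt_top ENNReal.ofReal_lt_top))
    · rw [← hEK, ← lintegral_add_right _ (hexpmeas.mul_const K)]
      refine setLIntegral_congr_fun measurableSet_Ioi (fun τ hτ => ?_)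
      rw [← mul_add, tsub_add_cancel_of_le (hWmono (le_of_lt hτ))]
  have hnum2 : ∫⁻ t in Ioo (0:ℝ) βM, (D t - K)
      = ENNReal.ofReal M' * (C - K * ENNReal.ofReal (Real.exp (-θ))) := by
    rw [← hβMeq, hsubst θ (fun t => D t - K)]
    calc ∫⁻ τ in Ioi θ, ENNReal.ofReal (M' * Real.exp (-τ)) * (D (M' * Real.exp (-τ)) - K)
        = ∫⁻ τ in Ioi θ, ENNReal.ofReal M' * (ENNReal.ofReal (Real.exp (-τ)) * (W τ - K)) := by
          refine lintegral_congr fun τ => ?_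
          rw [ENNReal.ofReal_mul hM'pos.le, mul_assoc]
      _ = ENNReal.ofReal M' * ∫⁻ τ in Ioi θ, ENNReal.ofReal (Real.exp (-τ)) * (W τ - K) :=
          lintegral_const_mul _ (hexpmeas.mul (hWmeas.sub measurable_const))
      _ = ENNReal.ofReal M' * (C - K * ENNReal.ofReal (Real.exp (-θ))) := by rw [hinner]
  -- real Gamma-type integrals
  set G : ℝ := ∫ τ in Ioi θ, Real.exp (-τ) * τ ^ n with hGdef
  have hgamma : ∫ τ in Ioi (0:ℝ), Real.exp (-τ) * τ ^ n = (n.factorial : ℝ) := by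
    have h1 := Real.Gamma_eq_integral (s := (n + 1 : ℝ)) (by positivity)
    have h2 : ∫ x in Ioi (0:ℝ), Real.exp (-x) * x ^ ((n + 1 : ℝ) - 1)
        = ∫ x in Ioi (0:ℝ), Real.exp (-x) * x ^ n := by
      refine setIntegral_congr_fun measurableSet_Ioi fun x hx => ?_
      rw [add_sub_cancel_right, Real.rpow_natCast]
    rw [h2] at h1
    rw [← h1]
    exact_mod_cast Real.Gamma_nat_eq_factorial n
  have hGnonneg : 0 ≤ G :=
    setIntegral_nonneg measurableSet_Ioi fun τ hτ =>
      mul_nonneg (Real.exp_pos _).le (pow_nonneg (lt_trans hθ hτ).le n)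
  have hGle : G ≤ (n.factorial : ℝ) := by
    rw [← hgamma, hGdef]
    exact setIntegral_mono_set (myIntOn le_rfl)
      ((ae_restrict_mem measurableSet_Ioi).mono fun τ hτ =>
        mul_nonneg (Real.exp_pos _).le (pow_nonneg (le_of_lt hτ) n))
      ((Ioi_subset_Ioi hθ.le).eventuallyLE)
  have hIoc : ∫ τ in Ioc (0:ℝ) θ, Real.exp (-τ) * τ ^ n = (n.factorial : ℝ) - G := by
    have hu : Ioc (0:ℝ) θ ∪ Ioi θ = Ioi 0 := Ioc_union_Ioi_eq_Ioi hθ.le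
    have hint1 : IntegrableOn (fun τ : ℝ => Real.exp (-τ) * τ ^ n) (Ioc 0 θ) :=
      (myIntOn le_rfl).mono_set Ioc_subset_Ioi_self
    have hsplit := MeasureTheory.setIntegral_union (Ioc_disjoint_Ioi le_rfl)
      measurableSet_Ioi hint1 (myIntOn hθ.le)
    rw [hu, hgamma] at hsplit
    rw [hGdef]
    linarith
  have hθn : (0:ℝ) < θ ^ n := by positivity
  have hwmeas : Measurable fun τ : ℝ => ENNReal.ofReal (Real.exp (-τ) * (τ / θ) ^ n) :=
    ((Real.measurable_exp.comp measurable_neg).mul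
      ((measurable_id.div_const θ).pow_const n)).ennreal_ofReal
  have hintW : ∀ {s : Set ℝ}, MeasurableSet s → s ⊆ Ioi 0 →
      IntegrableOn (fun τ : ℝ => Real.exp (-τ) * (τ / θ) ^ n) s := by
    intro s hs hsub
    refine IntegrableOn.congr_fun
      (((myIntOn (n := n) le_rfl).mono_set hsub).const_mul ((θ ^ n)⁻¹)) (fun x _ => ?_) hs
    rw [div_pow]
    field_simp
  have hvalIoi : ∫ τ in Ioi θ, Real.exp (-τ) * (τ / θ) ^ n = (θ ^ n)⁻¹ * G := by
    rw [hGdef, ← MeasureTheory.integral_const_mul]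
    refine setIntegral_congr_fun measurableSet_Ioi fun τ _ => ?_
    rw [div_pow]
    field_simp
  have hvalIoc : ∫ τ in Ioc (0:ℝ) θ, Real.exp (-τ) * (τ / θ) ^ n
      = (θ ^ n)⁻¹ * ((n.factorial : ℝ) - G) := by
    rw [← hIoc, ← MeasureTheory.integral_const_mul]
    refine setIntegral_congr_fun measurableSet_Ioc fun τ _ => ?_
    rw [div_pow]
    field_simp
  have hCle : C ≤ K * ENNReal.ofReal ((θ ^ n)⁻¹ * G) := by
    have hpt : ∀ τ ∈ Ioi θ, ENNReal.ofReal (Real.exp (-τ)) * W τ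
        ≤ ENNReal.ofReal (Real.exp (-τ) * (τ / θ) ^ n) * K := by
      intro τ hτ
      rw [ENNReal.ofReal_mul (Real.exp_pos _).le, mul_assoc]
      exact mul_le_mul_right (hWub τ (le_of_lt hτ)) _
    calc C ≤ ∫⁻ τ in Ioi θ, ENNReal.ofReal (Real.exp (-τ) * (τ / θ) ^ n) * K :=
        setLIntegral_mono (hwmeas.mul_const K) hpt
      _ = K * ENNReal.ofReal ((θ ^ n)⁻¹ * G) := by
        rw [lintegral_mul_const _ hwmeas,
          ← ofReal_integral_eq_lintegral_ofReal (hintW measurableSet_Ioi (Ioi_subset_Ioi hθ.le))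
            ((ae_restrict_mem measurableSet_Ioi).mono fun τ hτ =>
              mul_nonneg (Real.exp_pos _).le
                (pow_nonneg (div_nonneg (lt_trans hθ hτ).le hθ.le) n)),
          hvalIoi, mul_comm]
  have hIocLow : K * ENNReal.ofReal ((θ ^ n)⁻¹ * ((n.factorial : ℝ) - G))
      ≤ ∫⁻ τ in Ioc (0:ℝ) θ, ENNReal.ofReal (Real.exp (-τ)) * W τ := by
    have hpt : ∀ τ ∈ Ioc (0:ℝ) θ, ENNReal.ofReal (Real.exp (-τ) * (τ / θ) ^ n) * K
        ≤ ENNReal.ofReal (Real.exp (-τ)) * W τ := by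
      intro τ hτ
      rw [ENNReal.ofReal_mul (Real.exp_pos _).le, mul_assoc]
      exact mul_le_mul_right (hscale τ θ hτ.1 hτ.2) _
    calc K * ENNReal.ofReal ((θ ^ n)⁻¹ * ((n.factorial : ℝ) - G))
        = ∫⁻ τ in Ioc (0:ℝ) θ, ENNReal.ofReal (Real.exp (-τ) * (τ / θ) ^ n) * K := by
          rw [lintegral_mul_const _ hwmeas,
            ← ofReal_integral_eq_lintegral_ofReal (hintW measurableSet_Ioc (fun τ hτ => hτ.1))
              ((ae_restrict_mem measurableSet_Ioc).mono fun τ hτ =>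
                mul_nonneg (Real.exp_pos _).le
                  (pow_nonneg (div_nonneg hτ.1.le hθ.le) n)),
            hvalIoc, mul_comm]
      _ ≤ ∫⁻ τ in Ioc (0:ℝ) θ, ENNReal.ofReal (Real.exp (-τ)) * W τ :=
          setLIntegral_mono (hexpmeas.mul hWmeas) hpt
  have hden : ENNReal.ofReal M'
      * (K * ENNReal.ofReal ((θ ^ n)⁻¹ * ((n.factorial : ℝ) - G)) + C) ≤ 1 := by
    have hsplitIoi : ∫⁻ τ in Ioi (0:ℝ), ENNReal.ofReal (Real.exp (-τ)) * W τ
        = (∫⁻ τ in Ioc (0:ℝ) θ, ENNReal.ofReal (Real.exp (-τ)) * W τ) + C := by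
      rw [hCdef, ← lintegral_union measurableSet_Ioi (Ioc_disjoint_Ioi le_rfl),
        Ioc_union_Ioi_eq_Ioi hθ.le]
    calc ENNReal.ofReal M'
        * (K * ENNReal.ofReal ((θ ^ n)⁻¹ * ((n.factorial : ℝ) - G)) + C)
        ≤ ENNReal.ofReal M' * ∫⁻ τ in Ioi (0:ℝ), ENNReal.ofReal (Real.exp (-τ)) * W τ := by
          refine mul_le_mul_right ?_ _
          rw [hsplitIoi]
          exact add_le_add_left hIocLow C
      _ = ∫⁻ t in Ioo (0:ℝ) M', D t := by
          have hs0 := hsubst 0 D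
          rw [show M' * Real.exp (-(0:ℝ)) = M' by simp] at hs0
          rw [hs0, ← lintegral_const_mul (f := fun τ => ENNReal.ofReal (Real.exp (-τ)) * W τ) _ (hexpmeas.mul hWmeas)]
          refine lintegral_congr fun τ => ?_
          rw [ENNReal.ofReal_mul hM'pos.le, mul_assoc]
      _ ≤ ∫⁻ t in Ioi (0:ℝ), D t := lintegral_mono_set (fun t ht => ht.1)
      _ = ∫⁻ x, ENNReal.ofReal (f x) :=
          (lintegral_eq_lintegral_meas_lt volume (ae_of_all _ hf0) hf_meas.aemeasurable).symm
      _ = 1 := htot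
  -- final algebra
  set E : ℝ := Real.exp (-θ) * ∑ k ∈ Finset.range n, θ ^ k / k.factorial with hEdef
  have hsumnn : 0 ≤ ∑ k ∈ Finset.range n, θ ^ k / (k.factorial : ℝ) :=
    Finset.sum_nonneg fun k _ => by positivity
  have hE0 : 0 ≤ E := mul_nonneg (Real.exp_pos _).le hsumnn
  have hE1 : E ≤ 1 := by
    have h := Real.sum_le_exp_of_nonneg hθ.le n
    calc E ≤ Real.exp (-θ) * Real.exp θ :=
        mul_le_mul_of_nonneg_left h (Real.exp_pos _).le
      _ = 1 := by rw [← Real.exp_add]; simp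
  have hfacne : ((n.factorial : ℝ)) ≠ 0 := by
    exact_mod_cast n.factorial_ne_zero
  have hGid : G = (n.factorial : ℝ) * E + θ ^ n * Real.exp (-θ) := by
    rw [hGdef, myGammaId n hθ.le, hEdef]
    rw [Finset.sum_range_succ, div_self hfacne, one_mul, mul_add]
    congr 1
    · simp only [Finset.mul_sum]
      refine Finset.sum_congr rfl fun k _ => by ring
    · ring
  have hfinG : 0 ≤ (θ ^ n)⁻¹ * ((n.factorial : ℝ) - G) :=
    mul_nonneg (inv_nonneg.2 hθn.le) (by linarith)
  have hθnne : (θ : ℝ) ^ n ≠ 0 := ne_of_gt hθn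
  have hkey : C - K * ENNReal.ofReal (Real.exp (-θ))
      ≤ ENNReal.ofReal E
        * (K * ENNReal.ofReal ((θ ^ n)⁻¹ * ((n.factorial : ℝ) - G)) + C) := by
    rw [tsub_le_iff_right]
    have hsplitC : C = ENNReal.ofReal E * C + ENNReal.ofReal (1 - E) * C := by
      rw [← add_mul, ← ENNReal.ofReal_add hE0 (by linarith),
        show E + (1 - E) = 1 by ring, ENNReal.ofReal_one, one_mul]
    have h2 : ENNReal.ofReal (1 - E) * C
        ≤ ENNReal.ofReal E * (K * ENNReal.ofReal ((θ ^ n)⁻¹ * ((n.factorial : ℝ) - G)))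
          + K * ENNReal.ofReal (Real.exp (-θ)) := by
      have hid : (1 - E) * ((θ ^ n)⁻¹ * G)
          = E * ((θ ^ n)⁻¹ * ((n.factorial : ℝ) - G)) + Real.exp (-θ) := by
        rw [hGid]
        field_simp
        ring
      calc ENNReal.ofReal (1 - E) * C
          ≤ ENNReal.ofReal (1 - E) * (K * ENNReal.ofReal ((θ ^ n)⁻¹ * G)) :=
            mul_le_mul_right hCle _
        _ = K * ENNReal.ofReal ((1 - E) * ((θ ^ n)⁻¹ * G)) := by
            rw [ENNReal.ofReal_mul (show (0:ℝ) ≤ 1 - E by linarith)]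
            ring
        _ = K * (ENNReal.ofReal (E * ((θ ^ n)⁻¹ * ((n.factorial : ℝ) - G)))
              + ENNReal.ofReal (Real.exp (-θ))) := by
            congr 1
            rw [hid, ENNReal.ofReal_add (mul_nonneg hE0 hfinG) (Real.exp_pos _).le]
        _ = K * ENNReal.ofReal (E * ((θ ^ n)⁻¹ * ((n.factorial : ℝ) - G)))
              + K * ENNReal.ofReal (Real.exp (-θ)) := by rw [mul_add]
        _ = ENNReal.ofReal E
              * (K * ENNReal.ofReal ((θ ^ n)⁻¹ * ((n.factorial : ℝ) - G)))
              + K * ENNReal.ofReal (Real.exp (-θ)) := by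
            rw [ENNReal.ofReal_mul hE0]
            ring
    calc C = ENNReal.ofReal E * C + ENNReal.ofReal (1 - E) * C := hsplitC
      _ ≤ ENNReal.ofReal E * C
          + (ENNReal.ofReal E
              * (K * ENNReal.ofReal ((θ ^ n)⁻¹ * ((n.factorial : ℝ) - G)))
            + K * ENNReal.ofReal (Real.exp (-θ))) := add_le_add_right h2 _
      _ = ENNReal.ofReal E
            * (K * ENNReal.ofReal ((θ ^ n)⁻¹ * ((n.factorial : ℝ) - G)) + C)
          + K * ENNReal.ofReal (Real.exp (-θ)) := by ring
  calc ∫⁻ x in {x | f x < βM}, ENNReal.ofReal (f x)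
      ≤ ENNReal.ofReal M' * (C - K * ENNReal.ofReal (Real.exp (-θ))) := by
        rw [← hnum2]; exact hnum1
    _ ≤ ENNReal.ofReal M'
        * (ENNReal.ofReal E
            * (K * ENNReal.ofReal ((θ ^ n)⁻¹ * ((n.factorial : ℝ) - G)) + C)) :=
        mul_le_mul_right hkey _
    _ = ENNReal.ofReal E
        * (ENNReal.ofReal M'
            * (K * ENNReal.ofReal ((θ ^ n)⁻¹ * ((n.factorial : ℝ) - G)) + C)) := by
        ring
    _ ≤ ENNReal.ofReal E * 1 := mul_le_mul_right hden _
    _ = ENNReal.ofReal E := mul_one _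

/-- **Effective support / small-ball estimate**: if `X` has a log-concave density `f`
on `ℝⁿ`, then for every `0 < c < 1/e`,
`P{f(X) ≥ cⁿ ‖f‖_∞} ≥ 1 - (e · c · log(1/c))ⁿ`. -/
theorem prob_density_ge_small_ball {n : ℕ} (f : (Fin n → ℝ) → ℝ)
    (hf_meas : Measurable f) (hf_lc : LogConcave f)
    (hf_prob : ∫ x, f x = 1) :
    ∀ c : ℝ, 0 < c → c < 1 / Real.exp 1 →
      1 - ENNReal.ofReal ((Real.exp 1 * c * Real.log (1 / c)) ^ n)
        ≤ (volume.withDensity (fun x => ENNReal.ofReal (f x)))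
            {x | c ^ n * essSup f volume ≤ f x} := by
  intro c hc0 hc1
  rcases Nat.eq_zero_or_pos n with hn | hn
  · subst hn
    simp only [pow_zero, ENNReal.ofReal_one, tsub_self]
    exact zero_le
  have hnne : (n : ℝ) ≠ 0 := Nat.cast_ne_zero.2 hn.ne'
  have hf0 := hf_lc.1
  have hint : Integrable f volume := by
    by_contra h
    rw [integral_undef h] at hf_prob
    exact one_ne_zero hf_prob.symm
  have htot : ∫⁻ x, ENNReal.ofReal (f x) = 1 := by
    rw [← ofReal_integral_eq_lintegral_ofReal hint (ae_of_all _ hf0), hf_prob,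
      ENNReal.ofReal_one]
  set M := essSup f volume with hM
  set μf := volume.withDensity (fun x => ENNReal.ofReal (f x)) with hμf
  have hμftot : μf univ = 1 := by
    rw [hμf, withDensity_apply _ MeasurableSet.univ, Measure.restrict_univ]
    exact htot
  have hS : MeasurableSet {x | c ^ n * M ≤ f x} :=
    measurableSet_le measurable_const hf_meas
  have hcompl : {x | c ^ n * M ≤ f x}ᶜ = {x | f x < c ^ n * M} := by
    ext x; simp [not_le]
  have hsplit : μf {x | c ^ n * M ≤ f x} + μf {x | f x < c ^ n * M} = 1 := by
    rw [← hcompl, measure_add_measure_compl hS]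
    exact hμftot
  suffices hout : μf {x | f x < c ^ n * M}
      ≤ ENNReal.ofReal ((Real.exp 1 * c * Real.log (1 / c)) ^ n) by
    have hfin : μf {x | f x < c ^ n * M} ≠ ⊤ := by
      refine ne_top_of_le_ne_top ENNReal.one_ne_top ?_
      rw [← hsplit]; exact le_add_self
    have h1 : μf {x | c ^ n * M ≤ f x} = 1 - μf {x | f x < c ^ n * M} :=
      ENNReal.eq_sub_of_add_eq hfin hsplit
    rw [h1]
    exact tsub_le_tsub_left hout 1
  have hμfA : μf {x | f x < c ^ n * M}
      = ∫⁻ x in {x | f x < c ^ n * M}, ENNReal.ofReal (f x) :=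
    withDensity_apply _ (measurableSet_lt hf_meas measurable_const)
  by_cases hMpos : 0 < M
  swap
  · have hempty : {x | f x < c ^ n * M} = ∅ := by
      ext x
      simp only [mem_setOf_eq, mem_empty_iff_false, iff_false, not_lt]
      have : c ^ n * M ≤ 0 :=
        mul_nonpos_of_nonneg_of_nonpos (pow_nonneg hc0.le n) (not_lt.1 hMpos)
      linarith [hf0 x]
    rw [hempty]
    simp
  -- main case
  set L := Real.log (1 / c) with hL
  have hc1' : Real.exp 1 < 1 / c := by
    rw [lt_div_iff₀ hc0]
    have := (lt_div_iff₀ (Real.exp_pos 1)).1 hc1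
    linarith [this]
  have hL1 : 1 < L := by
    have h := Real.log_lt_log (Real.exp_pos 1) hc1'
    rwa [Real.log_exp] at h
  set T := (n : ℝ) * L with hT
  have hncast : (1:ℝ) ≤ (n:ℝ) := by exact_mod_cast hn
  have hTn : (n : ℝ) ≤ T := by
    rw [hT]; nlinarith
  have hTpos : 0 < T := lt_of_lt_of_le (by exact_mod_cast hn) hTn
  have hcL : Real.exp (-L) = c := by
    rw [hL, one_div, Real.log_inv, neg_neg, Real.exp_log hc0]
  have hβ : Real.exp (-T) = c ^ n := by
    rw [hT, show -((n:ℝ) * L) = (n:ℝ) * (-L) by ring, Real.exp_nat_mul, hcL]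
  -- the intermediate bound, for every θ ∈ (0, T)
  have hmain : ∀ θ ∈ Ioo (0:ℝ) T, μf {x | f x < c ^ n * M}
      ≤ ENNReal.ofReal (Real.exp (-θ) * ∑ k ∈ Finset.range n, θ ^ k / k.factorial) := by
    intro θ hθ
    have hβM : 0 < c ^ n * M := by positivity
    have hM'M : c ^ n * M * Real.exp θ < M := by
      have h1 : Real.exp θ < Real.exp T := Real.exp_lt_exp.2 hθ.2
      have h2 : c ^ n * Real.exp T = 1 := by
        rw [← hβ, ← Real.exp_add]; simp
      calc c ^ n * M * Real.exp θ < c ^ n * M * Real.exp T := by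
            refine mul_lt_mul_of_pos_left h1 (by positivity)
        _ = M := by rw [mul_comm (c ^ n) M, mul_assoc, h2, mul_one]
    have hposset : 0 < volume {x | c ^ n * M * Real.exp θ < f x} := by
      rcases eq_or_lt_of_le (zero_le (a := volume {x | c ^ n * M * Real.exp θ < f x}))
        with h0 | h0
      · have := myEssSupLe hf0 h0.symm
        rw [← hM] at this
        linarith
      · exact h0
    obtain ⟨x0, hx0⟩ := nonempty_of_measure_ne_zero (ne_of_gt hposset)
    have hKpos : 0 < volume {x | c ^ n * M < f x} := by
      rcases eq_or_lt_of_le (zero_le (a := volume {x | c ^ n * M < f x})) with h0 | h0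
      · have h1 := myEssSupLe hf0 h0.symm
        rw [← hM] at h1
        have hcn1 : c ^ n < 1 := by
          refine pow_lt_one₀ hc0.le ?_ hn.ne'
          have : (1:ℝ) < Real.exp 1 := by
            have := Real.add_one_le_exp 1; linarith
          calc c < 1 / Real.exp 1 := hc1
            _ < 1 := by rw [div_lt_one (Real.exp_pos 1)]; exact this
        nlinarith
      · exact h0
    rw [hμfA]
    exact myMainEst hf_meas hf_lc htot hβM hθ.1 hx0 hKpos
  -- pass to the limit θ → T⁻
  have hlim : μf {x | f x < c ^ n * M}
      ≤ ENNReal.ofReal (Real.exp (-T) * ∑ k ∈ Finset.range n, T ^ k / k.factorial) := by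
    have hcont : Continuous fun θ : ℝ =>
        Real.exp (-θ) * ∑ k ∈ Finset.range n, θ ^ k / (k.factorial : ℝ) := by
      refine (Real.continuous_exp.comp continuous_neg).mul ?_
      exact continuous_finset_sum _ fun k _ => (continuous_pow k).div_const _
    refine ge_of_tendsto (x := 𝓝[<] T) (f := fun θ : ℝ =>
      ENNReal.ofReal (Real.exp (-θ) * ∑ k ∈ Finset.range n, θ ^ k / k.factorial)) ?_ ?_
    · exact (ENNReal.continuous_ofReal.tendsto _).comp
        ((hcont.tendsto T).mono_left nhdsWithin_le_nhds)
    · filter_upwards [Ioo_mem_nhdsLT hTpos] with θ hθ using hmain θ hθ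
  refine le_trans hlim (ENNReal.ofReal_le_ofReal ?_)
  -- Poisson--Chernoff bound
  have hsum : ∑ k ∈ Finset.range n, T ^ k / (k.factorial : ℝ)
      ≤ (T / n) ^ n * Real.exp n := by
    have hterm : ∀ k ∈ Finset.range n, T ^ k / (k.factorial : ℝ)
        ≤ (T / n) ^ n * ((n : ℝ) ^ k / k.factorial) := by
      intro k hk
      have hkn : k ≤ n := (Finset.mem_range.1 hk).le
      have hcross : T ^ k * (n : ℝ) ^ n ≤ T ^ n * (n : ℝ) ^ k := by
        have h1 : (n : ℝ) ^ (n - k) ≤ T ^ (n - k) :=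
          pow_le_pow_left₀ (by positivity) hTn _
        have hkk : k + (n - k) = n := by omega
        calc T ^ k * (n : ℝ) ^ n = T ^ k * ((n : ℝ) ^ k * (n : ℝ) ^ (n - k)) := by
              rw [← pow_add, hkk]
          _ ≤ T ^ k * ((n : ℝ) ^ k * T ^ (n - k)) := by
              refine mul_le_mul_of_nonneg_left
                (mul_le_mul_of_nonneg_left h1 (by positivity)) (by positivity)
          _ = T ^ n * (n : ℝ) ^ k := by
              rw [mul_comm ((n:ℝ)^k) (T ^ (n-k)), ← mul_assoc, ← pow_add, hkk]
      rw [div_pow, div_mul_div_comm, div_le_div_iff₀ (by positivity) (by positivity)]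
      calc T ^ k * ((n:ℝ) ^ n * k.factorial) = (T ^ k * (n:ℝ) ^ n) * k.factorial := by ring
        _ ≤ (T ^ n * (n:ℝ) ^ k) * k.factorial :=
            mul_le_mul_of_nonneg_right hcross (by positivity)
        _ = T ^ n * (n:ℝ) ^ k * k.factorial := rfl
    calc ∑ k ∈ Finset.range n, T ^ k / (k.factorial : ℝ)
        ≤ ∑ k ∈ Finset.range n, (T / n) ^ n * ((n : ℝ) ^ k / k.factorial) :=
          Finset.sum_le_sum hterm
      _ = (T / n) ^ n * ∑ k ∈ Finset.range n, (n : ℝ) ^ k / k.factorial := by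
          rw [← Finset.mul_sum]
      _ ≤ (T / n) ^ n * Real.exp n :=
          mul_le_mul_of_nonneg_left (Real.sum_le_exp_of_nonneg (by positivity) n)
            (by positivity)
  have hTdivn : T / (n : ℝ) = L := by
    rw [hT]; field_simp
  calc Real.exp (-T) * ∑ k ∈ Finset.range n, T ^ k / (k.factorial : ℝ)
      ≤ Real.exp (-T) * ((T / n) ^ n * Real.exp n) :=
        mul_le_mul_of_nonneg_left hsum (Real.exp_pos _).le
    _ = (Real.exp 1 * c * L) ^ n := by
        rw [hTdivn, hβ, mul_pow, mul_pow, ← Real.exp_one_pow]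
        ring
end
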